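/- arXiv:2212.13373 — 2 statements merged into one kernel-verified Lean document; each statement's English description precedes it below -/
import Mathlib

section
/- The only involutions w in S_n with P_rBS(w) = P_cBS(w)^⊤ are the identity and the transposition (1,2). -/
namespace GelfandRSK

/-- Schensted insertion of `x` into a single row: replace the first entry greater than `x`,
returning the new row and the bumped entry (if any). -/
def insertRow (r : List ℕ) (x : ℕ) : List ℕ × Option ℕ :=
  match r.findIdx? (fun y => decide (x < y)) with
  | none => (r ++ [x], none)
  | some i => (r.set i x, r[i]?)

/-- Schensted row insertion of `x` into a tableau (list of rows). -/
def rsInsert : List (List ℕ) → ℕ → List (List ℕ)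
  | [], x => [[x]]
  | r :: rest, x =>
    match insertRow r x with
    | (r', none) => r' :: rest
    | (r', some y) => r' :: rsInsert rest y

/-- The (0-indexed) row in which Schensted insertion of `x` adds a new box. -/
def rsBumpRow : List (List ℕ) → ℕ → ℕ
  | [], _ => 0
  | r :: rest, x =>
    match insertRow r x with
    | (_, none) => 0
    | (_, some y) => rsBumpRow rest y + 1

/-- The (0-indexed) column in which Schensted insertion of `x` adds a new box. -/
def rsBumpCol (T : List (List ℕ)) (x : ℕ) : ℕ := (T.getD (rsBumpRow T x) []).length

/-- Add entry `k` at the end of (0-indexed) row `r`. -/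
def addAtRow (T : List (List ℕ)) (r : ℕ) (k : ℕ) : List (List ℕ) :=
  if r < T.length then T.set r (T.getD r [] ++ [k]) else T ++ [[k]]

/-- Add entry `k` at the end of (0-indexed) column `c`. -/
def addAtCol (T : List (List ℕ)) (c : ℕ) (k : ℕ) : List (List ℕ) :=
  addAtRow T (T.findIdx (fun r => decide (r.length ≤ c))) k

/-- The Robinson--Schensted insertion tableau of a word. -/
def PRS (w : List ℕ) : List (List ℕ) := w.foldl rsInsert []

/-- The Robinson--Schensted pair (insertion tableau, recording tableau) of a word. -/
def RSpair (w : List ℕ) : List (List ℕ) × List (List ℕ) :=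
  (w.zipIdx.map Prod.swap).foldl (fun pq ix =>
    (rsInsert pq.1 ix.2, addAtRow pq.2 (rsBumpRow pq.1 ix.2) (ix.1 + 1))) ([], [])

/-- The Robinson--Schensted recording tableau of a word. -/
def QRS (w : List ℕ) : List (List ℕ) := (RSpair w).2

/-- The row reading word: read rows left to right, starting with the last row. -/
def rowWord (T : List (List ℕ)) : List ℕ := T.reverse.flatten

/-- The shape of a tableau: the list of its row lengths. -/
def shape (T : List (List ℕ)) : List ℕ := T.map List.length

/-- Columns of the tableau are strictly increasing downwards. -/
def colStrict (T : List (List ℕ)) : Prop :=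
  ∀ i c, i + 1 < T.length → c < (T.getD (i+1) []).length →
    (T.getD i []).getD c 0 < (T.getD (i+1) []).getD c 0

/-- A partially standard tableau: semistandard, of partition shape, with
distinct positive entries (hence rows and columns strictly increasing). -/
def PartiallyStandard (T : List (List ℕ)) : Prop :=
  (∀ r ∈ T, r ≠ []) ∧
  T.Chain' (fun r₁ r₂ => r₂.length ≤ r₁.length) ∧
  (∀ r ∈ T, r.Chain' (· < ·)) ∧
  colStrict T ∧
  T.flatten.Nodup ∧
  (∀ x ∈ T.flatten, 0 < x)

/-- A standard tableau with `n` boxes: partially standard with entries exactly `1, …, n`. -/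
def IsStandardTab (n : ℕ) (T : List (List ℕ)) : Prop :=
  PartiallyStandard T ∧ T.flatten.Perm (List.range' 1 n)

/-- Row Beissinger insertion of a pair `(a, b)` with `a ≤ b`. -/
def rBS (T : List (List ℕ)) (a b : ℕ) : List (List ℕ) :=
  if a = b then addAtRow T 0 a
  else addAtRow (rsInsert T a) (rsBumpRow T a + 1) b

/-- Column Beissinger insertion of a pair `(a, b)` with `a ≤ b`. -/
def cBS (T : List (List ℕ)) (a b : ℕ) : List (List ℕ) :=
  if a = b then addAtCol T 0 a
  else addAtCol (rsInsert T a) (rsBumpCol T a + 1) b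

/-- The function on 0-based indices underlying a permutation of `Fin n`
(identity outside `[0, n)`). -/
def permFn {n : ℕ} (z : Equiv.Perm (Fin n)) : ℕ → ℕ :=
  fun i => if h : i < n then (z ⟨i, h⟩ : ℕ) else i

/-- The one-line word (with 1-based values) of a function on `[0, m)`. -/
def wordFn (w : ℕ → ℕ) (m : ℕ) : List ℕ := (List.range m).map (fun i => w i + 1)

/-- The one-line word (with 1-based values) of a permutation in `S_n`. -/
def wordOf {n : ℕ} (z : Equiv.Perm (Fin n)) : List ℕ := wordFn (permFn z) n

/-- The 1-based action of a permutation: `act y j = y(j)` in 1-based notation. -/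
def act {n : ℕ} (y : Equiv.Perm (Fin n)) (j : ℕ) : ℕ := permFn y (j - 1) + 1

/-- The 1-based pairs `(a, b)` with `a ≤ b = z(a)` of an involution,
listed in increasing order of `b`. -/
def invPairsFn (w : ℕ → ℕ) (m : ℕ) : List (ℕ × ℕ) :=
  ((List.range m).filter (fun b => decide (w b ≤ b))).map (fun b => (w b + 1, b + 1))

/-- Row Beissinger correspondence applied to an involution given as a function on `[0, m)`. -/
def PrBSfn (w : ℕ → ℕ) (m : ℕ) : List (List ℕ) :=
  (invPairsFn w m).foldl (fun T p => rBS T p.1 p.2) []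

/-- Column Beissinger correspondence applied to an involution given as a function on `[0, m)`. -/
def PcBSfn (w : ℕ → ℕ) (m : ℕ) : List (List ℕ) :=
  (invPairsFn w m).foldl (fun T p => cBS T p.1 p.2) []

/-- The row Beissinger tableau of an involution in `S_n`. -/
def PrBS {n : ℕ} (z : Equiv.Perm (Fin n)) : List (List ℕ) := PrBSfn (permFn z) n

/-- The column Beissinger tableau of an involution in `S_n`. -/
def PcBS {n : ℕ} (z : Equiv.Perm (Fin n)) : List (List ℕ) := PcBSfn (permFn z) n

/-- The transpose of a tableau. -/
def transposeT (T : List (List ℕ)) : List (List ℕ) :=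
  (List.range (T.headD []).length).map (fun c => T.filterMap (fun r => r[c]?))

/-- The length of (0-indexed) column `c`. -/
def colLen (T : List (List ℕ)) (c : ℕ) : ℕ := (T.filter (fun r => decide (c < r.length))).length

/-- The number of columns of odd length. -/
def oddColCount (T : List (List ℕ)) : ℕ :=
  ((List.range (T.headD []).length).filter (fun c => decide (colLen T c % 2 = 1))).length

/-- The number of rows of odd length. -/
def oddRowCount (T : List (List ℕ)) : ℕ :=
  (T.filter (fun r => decide (r.length % 2 = 1))).length

/-- Apply a function to every entry of a tableau. -/
def applyEntries (f : ℕ → ℕ) (T : List (List ℕ)) : List (List ℕ) := T.map (List.map f)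

/-- The transposition of values `j` and `j+1`. -/
def swapVals (j : ℕ) : ℕ → ℕ := fun x => if x = j then j + 1 else if x = j + 1 then j else x

/-- The elementary dual equivalence operator `D_i` acting on a tableau
containing the entries `i-1`, `i`, `i+1`, defined via the row reading word. -/
def Dop (i : ℕ) (T : List (List ℕ)) : List (List ℕ) :=
  let w := rowWord T
  let p : ℕ → ℕ := fun v => w.idxOf v
  if (p i < p (i+1) ∧ p (i+1) < p (i-1)) ∨ (p (i-1) < p (i+1) ∧ p (i+1) < p i) then
    applyEntries (swapVals (i-1)) T
  else if (p i < p (i-1) ∧ p (i-1) < p (i+1)) ∨ (p (i+1) < p (i-1) ∧ p (i-1) < p i) then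
    applyEntries (swapVals i) T
  else T

/-- `x` lies strictly between `u` and `v`. -/
def Btwn {α : Type*} [LT α] (x u v : α) : Prop := (u < x ∧ x < v) ∨ (v < x ∧ x < u)

/-- Exchange the entries at 0-based positions `p` and `q` of a word. -/
def swapPos (u : List ℕ) (p q : ℕ) : List ℕ := (u.set p (u.getD q 0)).set q (u.getD p 0)

/-- The Knuth move relation at 1-based position `i` on words: either the word is
unchanged and the letters at positions `i-1, i, i+1` are monotone, or the letters at
positions `i-1, i` are exchanged (when the letter at position `i+1` is between them),
or the letters at positions `i, i+1` are exchanged (when the letter at position `i-1`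
is between them). -/
def KnuthRelW (i : ℕ) (u v : List ℕ) : Prop :=
  (v = u ∧ ((u.getD (i-2) 0 < u.getD (i-1) 0 ∧ u.getD (i-1) 0 < u.getD i 0) ∨
            (u.getD i 0 < u.getD (i-1) 0 ∧ u.getD (i-1) 0 < u.getD (i-2) 0))) ∨
  (Btwn (u.getD i 0) (u.getD (i-2) 0) (u.getD (i-1) 0) ∧ v = swapPos u (i-2) (i-1)) ∨
  (Btwn (u.getD (i-2) 0) (u.getD (i-1) 0) (u.getD i 0) ∧ v = swapPos u (i-1) i)

/-- The Knuth move relation at position `i` on permutations. -/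
def KnuthRel {n : ℕ} (i : ℕ) (v w : Equiv.Perm (Fin n)) : Prop :=
  KnuthRelW i (wordOf v) (wordOf w)

/-- The dual Knuth move relation at position `i` on permutations. -/
def DualKnuthRel {n : ℕ} (i : ℕ) (v w : Equiv.Perm (Fin n)) : Prop :=
  KnuthRelW i (wordOf v⁻¹) (wordOf w⁻¹)

/-- Knuth equivalence of permutations. -/
def KnuthEquiv {n : ℕ} (v w : Equiv.Perm (Fin n)) : Prop :=
  Relation.ReflTransGen (fun a b => ∃ i, 1 < i ∧ i < n ∧ KnuthRel i a b) v w

/-- Dual Knuth equivalence of permutations. -/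
def DualKnuthEquiv {n : ℕ} (v w : Equiv.Perm (Fin n)) : Prop :=
  Relation.ReflTransGen (fun a b => ∃ i, 1 < i ∧ i < n ∧ DualKnuthRel i a b) v w

/-- The 0-based fixed points of a permutation, in increasing order. -/
def fixList {n : ℕ} (z : Equiv.Perm (Fin n)) : List ℕ :=
  ((List.finRange n).filter (fun c => decide (z c = c))).map Fin.val

/-- The ascending embedding `ι_asc` of involutions of `[n]` into fixed-point-free
involutions of `[2n]`, as a function on 0-based indices. -/
def iotaAsc {n : ℕ} (z : Equiv.Perm (Fin n)) : ℕ → ℕ := fun i =>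
  let F := fixList z
  if h : i < n then
    if z ⟨i, h⟩ = ⟨i, h⟩ then n + F.idxOf i else (z ⟨i, h⟩ : ℕ)
  else if i < n + F.length then F.getD (i - n) 0
  else if i % 2 = 0 then i + 1 else i - 1

/-- The descending embedding `ι_des` of involutions of `[n]` into fixed-point-free
involutions of `[2n]`, as a function on 0-based indices. -/
def iotaDes {n : ℕ} (z : Equiv.Perm (Fin n)) : ℕ → ℕ := fun i =>
  let F := fixList z
  if h : i < n then
    if z ⟨i, h⟩ = ⟨i, h⟩ then n + F.length - 1 - F.idxOf i else (z ⟨i, h⟩ : ℕ)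
  else if i < n + F.length then F.getD (n + F.length - 1 - i) 0
  else if i % 2 = 0 then i + 1 else i - 1

/-- The number of inversions of a function on `[0, m)`. -/
def lenFn (w : ℕ → ℕ) (m : ℕ) : ℕ :=
  ((Finset.range m ×ˢ Finset.range m).filter (fun p => p.1 < p.2 ∧ w p.2 < w p.1)).card

/-- Weak descents (0-based indices `i` with `0 ≤ i < n-1`). -/
def wDesEq (w : ℕ → ℕ) (n : ℕ) : Finset ℕ :=
  (Finset.range (n-1)).filter (fun i => w i = i + 1 ∧ w (i+1) = i)

/-- Weak ascents. -/
def wAscEq (w : ℕ → ℕ) (n : ℕ) : Finset ℕ :=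
  (Finset.range (n-1)).filter (fun i => n ≤ w i ∧ n ≤ w (i+1))

/-- Strict descents. -/
def wDesLt (w : ℕ → ℕ) (n : ℕ) : Finset ℕ :=
  ((Finset.range (n-1)).filter (fun i => w (i+1) < w i)) \ (wAscEq w n ∪ wDesEq w n)

/-- Strict ascents. -/
def wAscLt (w : ℕ → ℕ) (n : ℕ) : Finset ℕ :=
  ((Finset.range (n-1)).filter (fun i => w i < w (i+1))) \ wAscEq w n

/-- Delete all boxes of `T` whose entry exceeds `n`. -/
def restrictT (T : List (List ℕ)) (n : ℕ) : List (List ℕ) :=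
  (T.map (fun r => r.filter (fun x => decide (x ≤ n)))).filter (fun r => !r.isEmpty)

/-- The 0-based indices of the odd columns of `T`, in increasing order. -/
def oddColsList (T : List (List ℕ)) : List ℕ :=
  (List.range (T.headD []).length).filter (fun c => decide (colLen T c % 2 = 1))

/-- Given a standard tableau `T` with `n` boxes and `k` odd columns, place
`n+1, …, n+k` at the bottoms of the odd columns from left to right, then add
`n+k+1, n+k+3, …, 2n-1` to the first row and `n+k+2, n+k+4, …, 2n` to the second row. -/
def iotaRow (n : ℕ) (T : List (List ℕ)) : List (List ℕ) :=
  let cols := oddColsList T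
  let k := cols.length
  let T1 := (cols.zipIdx.map Prod.swap).foldl (fun S ci => addAtCol S ci.2 (n + 1 + ci.1)) T
  let T2 := (List.range ((n - k) / 2)).foldl (fun S m => addAtRow S 0 (n + k + 1 + 2*m)) T1
  (List.range ((n - k) / 2)).foldl (fun S m => addAtRow S 1 (n + k + 2 + 2*m)) T2

/-- The number of transfer points: 0-based `i < n` with `w i ≥ n` (1-based `w(i) > n`). -/
def transferCount (w : ℕ → ℕ) (n : ℕ) : ℕ :=
  ((List.range n).filter (fun i => decide (n ≤ w i))).length

/-- `G^asc_n`: the image of the ascending embedding. -/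
def GAsc (n : ℕ) : Set (ℕ → ℕ) := {f | ∃ w : Equiv.Perm (Fin n), w * w = 1 ∧ f = iotaAsc w}

/-- `G^des_n`: the image of the descending embedding. -/
def GDes (n : ℕ) : Set (ℕ → ℕ) := {f | ∃ w : Equiv.Perm (Fin n), w * w = 1 ∧ f = iotaDes w}

/-- The value `e(j)` from the statement of Theorem on column Beissinger dual
equivalence: for 1-based `j`, `e(j) = -j` if `y(j) = j`; `e(j) = j` if
`j ≠ y(j) ∈ {i-1, i, i+1}`; and `e(j) = y(j)` otherwise. -/
def eVal {n : ℕ} (y : Equiv.Perm (Fin n)) (i j : ℕ) : ℤ :=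
  if act y j = j then -(j : ℤ)
  else if act y j ∈ ({i-1, i, i+1} : Finset ℕ) then (j : ℤ)
  else (act y j : ℤ)

/-- Schensted column insertion, via the transpose. -/
def colInsertT (T : List (List ℕ)) (x : ℕ) : List (List ℕ) :=
  transposeT (rsInsert (transposeT T) x)

/-- The (0-indexed) row in which Schensted column insertion of `x` adds a box. -/
def colBumpRow (T : List (List ℕ)) (x : ℕ) : ℕ := rsBumpCol (transposeT T) x

/-- The alternative column Beissinger insertion `T ⇐cBS (a,b)`: if `a = b`, add `a`
at the end of the first row; if `a < b`, column insert `a` (adding a box in row `i`)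
and add `b` at the end of row `i+1`. -/
def cBSalt (T : List (List ℕ)) (a b : ℕ) : List (List ℕ) :=
  if a = b then addAtRow T 0 a
  else addAtRow (colInsertT T a) (colBumpRow T a + 1) b

theorem insertRow_nil (x : ℕ) : insertRow [] x = ([x], none) := rfl

theorem insertRow_cons (y : ℕ) (t : List ℕ) (x : ℕ) :
    insertRow (y :: t) x = if x < y then (x :: t, some y)
      else ((y :: (insertRow t x).1), (insertRow t x).2) := by
  unfold insertRow
  rw [List.findIdx?_cons]
  by_cases h : x < y
  · simp [h]
  · simp only [h, decide_eq_true_eq, if_neg, decide_false]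
    cases hf : List.findIdx? (fun y => decide (x < y)) t with
    | none => simp [hf, h]
    | some i => simp [hf, h]

theorem insertRow_fst_ne_nil (t : List ℕ) (x : ℕ) : (insertRow t x).1 ≠ [] := by
  cases t with
  | nil => simp [insertRow_nil]
  | cons y t =>
    rw [insertRow_cons]
    split <;> simp

theorem insertRow_mem_fst {t : List ℕ} {x y : ℕ} (h : y ∈ (insertRow t x).1) :
    y = x ∨ y ∈ t := by
  induction t with
  | nil => simp [insertRow_nil] at h; tauto
  | cons z t ih =>
    rw [insertRow_cons] at h
    by_cases hxz : x < z
    · rw [if_pos hxz] at h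
      rcases List.mem_cons.mp h with h | h
      · exact Or.inl h
      · exact Or.inr (List.mem_cons_of_mem _ h)
    · rw [if_neg hxz] at h
      rcases List.mem_cons.mp h with h | h
      · exact Or.inr (by simp [h])
      · rcases ih h with h | h
        · exact Or.inl h
        · exact Or.inr (List.mem_cons_of_mem _ h)

theorem insertRow_mem_snd {t : List ℕ} {x y : ℕ} (h : (insertRow t x).2 = some y) :
    y ∈ t := by
  induction t with
  | nil => simp [insertRow_nil] at h
  | cons z t ih =>
    rw [insertRow_cons] at h
    by_cases hxz : x < z
    · rw [if_pos hxz] at h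
      simp at h; simp [h]
    · rw [if_neg hxz] at h
      exact List.mem_cons_of_mem _ (ih h)

theorem insertRow_small_prefix {p : List ℕ} {x : ℕ} (hp : ∀ y ∈ p, ¬ x < y) (e : List ℕ) :
    insertRow (p ++ e) x = (p ++ (insertRow e x).1, (insertRow e x).2) := by
  induction p with
  | nil => simp
  | cons z p ih =>
    have hz : ¬ x < z := hp z (by simp)
    rw [List.cons_append, insertRow_cons, if_neg hz,
      ih (fun y hy => hp y (List.mem_cons_of_mem _ hy))]
    simp

theorem insertRow_all_big {e : List ℕ} {x : ℕ} (he : ∀ y ∈ e, x < y) :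
    insertRow e x = (x :: e.tail, e.head?) := by
  cases e with
  | nil => simp [insertRow_nil]
  | cons z t => rw [insertRow_cons, if_pos (he z (by simp))]; rfl

theorem rsInsert_ne_nil (T : List (List ℕ)) (x : ℕ) : rsInsert T x ≠ [] := by
  cases T with
  | nil => simp [rsInsert]
  | cons r rest =>
    unfold rsInsert
    rcases h : insertRow r x with ⟨r', o⟩
    cases o <;> simp

theorem headD_rsInsert (T : List (List ℕ)) (x : ℕ) :
    (rsInsert T x).headD [] = (insertRow (T.headD []) x).1 := by
  cases T with
  | nil => simp [rsInsert, insertRow_nil]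
  | cons r rest =>
    unfold rsInsert
    rcases h : insertRow r x with ⟨r', o⟩
    cases o <;> simp [h]

theorem addAtRow_nil (i k : ℕ) : addAtRow [] i k = [[k]] := by
  simp [addAtRow]

theorem headD_addAtRow_pos (T : List (List ℕ)) (hT : T ≠ []) {i : ℕ} (hi : 1 ≤ i) (b : ℕ) :
    (addAtRow T i b).headD [] = T.headD [] := by
  cases T with
  | nil => exact absurd rfl hT
  | cons r rest =>
    unfold addAtRow
    split
    · obtain ⟨i', rfl⟩ : ∃ i', i = i' + 1 := ⟨i - 1, by omega⟩
      rw [List.set_cons_succ]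
      simp
    · simp

theorem headD_rBS (T : List (List ℕ)) (a b : ℕ) :
    (rBS T a b).headD [] = if a = b then T.headD [] ++ [a]
      else (insertRow (T.headD []) a).1 := by
  unfold rBS
  split
  · cases T with
    | nil => simp [addAtRow]
    | cons r rest =>
      unfold addAtRow
      simp
  · rw [headD_addAtRow_pos _ (rsInsert_ne_nil _ _) (by omega), headD_rsInsert]
/-- All pairs in the list have first component `> j` and are weakly increasing. -/
def GoodL (j : ℕ) (L : List (ℕ × ℕ)) : Prop := ∀ p ∈ L, j < p.1 ∧ p.1 ≤ p.2

abbrev foldR (T : List (List ℕ)) (L : List (ℕ × ℕ)) : List (List ℕ) :=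
  L.foldl (fun T p => rBS T p.1 p.2) T

abbrev foldC (T : List (List ℕ)) (L : List (ℕ × ℕ)) : List (List ℕ) :=
  L.foldl (fun T p => cBS T p.1 p.2) T

/-- Row-0 phase lemma for row Beissinger insertion. -/
theorem row0_phase {j : ℕ} {L : List (ℕ × ℕ)} (hL : GoodL j L) :
    ∀ {T : List (List ℕ)} {p e : List ℕ}, (∀ y ∈ p, y ≤ j) →
    T.headD [] = p ++ e → (∀ y ∈ e, j < y) →
    ∃ e', (foldR T L).headD [] = p ++ e' ∧ ∀ y ∈ e', j < y := by
  induction L with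
  | nil => exact fun hp hT he => ⟨_, hT, he⟩
  | cons q L ih =>
    intro T p e hp hT he
    obtain ⟨hq1, hq2⟩ := hL q (by simp)
    have hL' : GoodL j L := fun r hr => hL r (by simp [hr])
    by_cases hab : q.1 = q.2
    · refine ih hL' (T := rBS T q.1 q.2) (p := p) (e := e ++ [q.1]) hp ?_ ?_
      · rw [headD_rBS, if_pos hab, hT, List.append_assoc]
      · intro y hy
        rcases List.mem_append.mp hy with hy | hy
        · exact he y hy
        · simp at hy; omega
    · refine ih hL' (T := rBS T q.1 q.2) (p := p) (e := (insertRow e q.1).1) hp ?_ ?_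
      · rw [headD_rBS, if_neg hab, hT,
          insertRow_small_prefix (fun y hy => by have := hp y hy; omega)]
      · intro y hy
        rcases insertRow_mem_fst hy with rfl | hy
        · exact hq1
        · exact he y hy

/-- Row-0 special step for row Beissinger insertion. -/
theorem row0_special {T : List (List ℕ)} {p e : List ℕ} {j b : ℕ}
    (hp : ∀ y ∈ p, y ≤ j) (hT : T.headD [] = p ++ e) (he : ∀ y ∈ e, j < y)
    (hb : j ≠ b) :
    (rBS T j b).headD [] = p ++ j :: e.tail := by
  rw [headD_rBS, if_neg hb, hT,
    insertRow_small_prefix (fun y hy => by have := hp y hy; omega),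
    insertRow_all_big he]

/-- The pattern invariant for the column Beissinger side: each row of `P` is a
prefix of the corresponding row of `T`, with all remaining entries `> j`. -/
def patOK (j : ℕ) : List (List ℕ) → List (List ℕ) → Prop
  | [], T => ∀ r ∈ T, r ≠ [] ∧ ∀ y ∈ r, j < y
  | p :: P, T => ∃ r T', T = r :: T' ∧ r ≠ [] ∧ p <+: r ∧
      (∀ y ∈ r.drop p.length, j < y) ∧ patOK j P T'

theorem patOK_ne_nil {j : ℕ} : ∀ {P T : List (List ℕ)}, patOK j P T →
    ∀ r ∈ T, r ≠ [] := by
  intro P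
  induction P with
  | nil => intro T h r hr; exact (h r hr).1
  | cons p P ih =>
    intro T h r hr
    obtain ⟨r', T', rfl, hne, _, _, hP⟩ := h
    rcases List.mem_cons.mp hr with rfl | hr
    · exact hne
    · exact ih hP r hr

theorem patOK_nil_insert {j : ℕ} : ∀ {T : List (List ℕ)} {x : ℕ},
    patOK j [] T → j < x → patOK j [] (rsInsert T x) := by
  intro T
  induction T with
  | nil =>
    intro x _ hx
    simp only [rsInsert, patOK]
    intro r hr; simp at hr; subst hr
    exact ⟨by simp, by simpa using hx⟩
  | cons r T ih =>
    intro x h hx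
    have hr := h r (by simp)
    have hT : patOK j [] T := fun s hs => h s (by simp [hs])
    unfold rsInsert
    rcases hins : insertRow r x with ⟨r', o⟩
    have hr' : r' ≠ [] ∧ ∀ y ∈ r', j < y := by
      constructor
      · have := insertRow_fst_ne_nil r x; rw [hins] at this; exact this
      · intro y hy
        have : y ∈ (insertRow r x).1 := by rw [hins]; exact hy
        rcases insertRow_mem_fst this with rfl | hy'
        · exact hx
        · exact hr.2 y hy'
    cases o with
    | none =>
      intro s hs
      rcases List.mem_cons.mp hs with rfl | hs
      · exact hr'
      · exact hT s hs
    | some y =>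
      have hy : y ∈ r := insertRow_mem_snd (by rw [hins])
      have hjy : j < y := hr.2 y hy
      intro s hs
      rcases List.mem_cons.mp hs with rfl | hs
      · exact hr'
      · exact ih hT hjy s hs

theorem patOK_insert {j : ℕ} : ∀ {P T : List (List ℕ)} {x : ℕ},
    (∀ r ∈ P, ∀ y ∈ r, y ≤ j) → patOK j P T → j < x →
    patOK j P (rsInsert T x) := by
  intro P
  induction P with
  | nil => exact fun _ h hx => patOK_nil_insert h hx
  | cons p P ih =>
    intro T x hPl h hx
    obtain ⟨r, T', rfl, hne, hpre, hdrop, hP⟩ := h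
    obtain ⟨e, rfl⟩ := hpre
    rw [List.drop_left] at hdrop
    have hsmall : ∀ y ∈ p, ¬ x < y := fun y hy => by
      have := hPl p (by simp) y hy; omega
    unfold rsInsert
    rw [insertRow_small_prefix hsmall]
    have hrow : (p ++ (insertRow e x).1) ≠ [] ∧ p <+: (p ++ (insertRow e x).1) ∧
        ∀ y ∈ (p ++ (insertRow e x).1).drop p.length, j < y := by
      refine ⟨by simp [insertRow_fst_ne_nil], List.prefix_append _ _, ?_⟩
      rw [List.drop_left]
      intro y hy
      rcases insertRow_mem_fst hy with rfl | hy
      · exact hx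
      · exact hdrop y hy
    cases ho : (insertRow e x).2 with
    | none =>
      exact ⟨_, _, rfl, hrow.1, hrow.2.1, hrow.2.2, hP⟩
    | some y =>
      have hy : y ∈ e := insertRow_mem_snd ho
      exact ⟨_, _, rfl, hrow.1, hrow.2.1, hrow.2.2,
        ih (fun r hr => hPl r (by simp [hr])) hP (hdrop y hy)⟩
theorem addAtRow_cons_succ (r : List ℕ) (T : List (List ℕ)) (i b : ℕ) :
    addAtRow (r :: T) (i+1) b = r :: addAtRow T i b := by
  unfold addAtRow
  by_cases h : i < T.length
  · rw [if_pos (by simpa using h), if_pos h, List.set_cons_succ]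
    simp [List.getD_cons_succ]
  · rw [if_neg (by simpa using h), if_neg h]
    simp

theorem addAtRow_cons_zero (r : List ℕ) (T : List (List ℕ)) (b : ℕ) :
    addAtRow (r :: T) 0 b = (r ++ [b]) :: T := by
  unfold addAtRow
  simp

theorem patOK_addAtRow {j b : ℕ} (hb : j < b) :
    ∀ {P T : List (List ℕ)} (i : ℕ), patOK j P T → patOK j P (addAtRow T i b) := by
  intro P
  induction P with
  | nil =>
    intro T i h
    unfold addAtRow
    split
    · intro r hr
      rcases List.mem_or_eq_of_mem_set hr with hr | rfl
      · exact h r hr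
      · have hTi : T.getD i [] ∈ T := by rw [List.getD_eq_getElem _ _ (by assumption)]; exact List.getElem_mem _
        refine ⟨by simp, fun y hy => ?_⟩
        rcases List.mem_append.mp hy with hy | hy
        · exact (h _ hTi).2 y hy
        · simp at hy; omega
    · intro r hr
      rcases List.mem_append.mp hr with hr | hr
      · exact h r hr
      · simp at hr; subst hr
        exact ⟨by simp, by simp; omega⟩
  | cons p P ih =>
    intro T i h
    obtain ⟨r, T', rfl, hne, hpre, hdrop, hP⟩ := h
    cases i with
    | zero =>
      rw [addAtRow_cons_zero]
      refine ⟨_, _, rfl, by simp [hne], hpre.trans (List.prefix_append _ _), ?_, hP⟩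
      rw [List.drop_append_of_le_length hpre.length_le]
      intro y hy
      rcases List.mem_append.mp hy with hy | hy
      · exact hdrop y hy
      · simp at hy; omega
    | succ i' =>
      rw [addAtRow_cons_succ]
      exact ⟨_, _, rfl, hne, hpre, hdrop, ih i' hP⟩

theorem patOK_addAtCol {j b : ℕ} (hb : j < b) {P T : List (List ℕ)} (c : ℕ)
    (h : patOK j P T) : patOK j P (addAtCol T c b) :=
  patOK_addAtRow hb _ h

theorem patOK_cBS {j a b : ℕ} {P T : List (List ℕ)}
    (hPl : ∀ r ∈ P, ∀ y ∈ r, y ≤ j) (h : patOK j P T) (ha : j < a) (hab : a ≤ b) :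
    patOK j P (cBS T a b) := by
  unfold cBS
  split
  · exact patOK_addAtCol ha _ h
  · exact patOK_addAtCol (by omega) _ (patOK_insert hPl h ha)

/-- Inserting a value `≤ j` into a tableau with all entries `> j` puts it at
the head of the first row. -/
theorem patOK_insert_small {j x : ℕ} {T : List (List ℕ)}
    (h : patOK j [] T) (hx : x ≤ j) : patOK j [[x]] (rsInsert T x) := by
  cases T with
  | nil =>
    refine ⟨[x], [], rfl, by simp, by simp, by simp, ?_⟩
    intro r hr; simp at hr
  | cons r T' =>
    obtain ⟨hne, hbig⟩ := h r (by simp)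
    have hall : ∀ y ∈ r, x < y := fun y hy => by have := hbig y hy; omega
    unfold rsInsert
    rw [insertRow_all_big hall]
    cases r with
    | nil => exact absurd rfl hne
    | cons z t =>
      simp only [List.head?_cons, List.tail_cons]
      refine ⟨x :: t, _, rfl, by simp, by simp, ?_,
        patOK_nil_insert (fun s hs => h s (by simp [hs])) (hbig z (by simp))⟩
      intro y hy
      simp at hy
      exact hbig y (by simp [hy])

/-- Column Beissinger step for a small value into a generic tableau. -/
theorem patOK_cBS_small {j x b : ℕ} {T : List (List ℕ)}
    (h : patOK j [] T) (hx : x ≤ j) (hb : j < b) :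
    patOK j [[x]] (cBS T x b) := by
  unfold cBS
  rw [if_neg (by omega)]
  exact patOK_addAtCol hb _ (patOK_insert_small h hx)

/-- Column Beissinger step inserting `x₁` below an existing head `x₂`. -/
theorem patOK_cBS_two {j x₁ x₂ b : ℕ} {T : List (List ℕ)}
    (h : patOK j [[x₂]] T) (h12 : x₁ < x₂) (hx2 : x₂ ≤ j) (hb : j < b) :
    patOK j [[x₁], [x₂]] (cBS T x₁ b) := by
  obtain ⟨r, T', rfl, hne, hpre, hdrop, hP⟩ := h
  obtain ⟨e, rfl⟩ := hpre
  rw [List.drop_left] at hdrop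
  unfold cBS
  rw [if_neg (by omega)]
  refine patOK_addAtCol hb _ ?_
  unfold rsInsert
  have hall : ∀ y ∈ [x₂] ++ e, x₁ < y := by
    intro y hy
    rcases List.mem_append.mp hy with hy | hy
    · simp at hy; omega
    · have := hdrop y hy; omega
  rw [insertRow_all_big hall]
  simp only [List.cons_append, List.head?_cons, List.tail_cons]
  exact ⟨_, _, rfl, by simp, by simp, by simpa using hdrop,
    patOK_insert_small hP hx2⟩

/-- Column Beissinger step inserting the milestone `j` after the row-0 pattern. -/
theorem patOK_cBS_special {j b : ℕ} {p₀ : List ℕ} {P T : List (List ℕ)}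
    (h : patOK j (p₀ :: P) T) (hp₀ : ∀ y ∈ p₀, y < j)
    (hPl : ∀ r ∈ P, ∀ y ∈ r, y ≤ j) (hb : j < b) :
    patOK j ((p₀ ++ [j]) :: P) (cBS T j b) := by
  obtain ⟨r, T', rfl, hne, hpre, hdrop, hP⟩ := h
  obtain ⟨e, rfl⟩ := hpre
  rw [List.drop_left] at hdrop
  unfold cBS
  rw [if_neg (by omega)]
  refine patOK_addAtCol hb _ ?_
  unfold rsInsert
  rw [insertRow_small_prefix (fun y hy => by have := hp₀ y hy; omega),
    insertRow_all_big hdrop]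
  cases e with
  | nil =>
    simp only [List.head?_nil]
    exact ⟨_, _, rfl, by simp, by simp, by simp, hP⟩
  | cons z t =>
    simp only [List.head?_cons, List.tail_cons]
    refine ⟨_, _, rfl, by simp, ?_, ?_, patOK_insert hPl hP (hdrop z (by simp))⟩
    · simpa using (List.prefix_append (p₀ ++ [j]) t)
    · intro y hy
      rw [show p₀ ++ j :: t = (p₀ ++ [j]) ++ t by simp, List.drop_left] at hy
      · exact hdrop y (by simp [hy])

theorem patOK_ge {j : ℕ} : ∀ {P T : List (List ℕ)} {i : ℕ} {r : List ℕ},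
    patOK j P T → P.length ≤ i → T[i]? = some r → ∀ y ∈ r, j < y := by
  intro P
  induction P with
  | nil =>
    intro T i r h _ hi
    exact (h r (List.mem_of_getElem? hi)).2
  | cons p P ih =>
    intro T i r h hi hTi
    obtain ⟨r', T', rfl, _, _, _, hP⟩ := h
    simp only [List.length_cons] at hi
    obtain ⟨i', rfl⟩ : ∃ i', i = i' + 1 := ⟨i - 1, by omega⟩
    rw [List.getElem?_cons_succ] at hTi
    exact ih hP (by omega) hTi

theorem patOK_lt {j : ℕ} : ∀ {P T : List (List ℕ)} {i : ℕ} (hi : i < P.length),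
    patOK j P T → ∃ r, T[i]? = some r ∧ P[i] <+: r := by
  intro P
  induction P with
  | nil => intro T i hi; simp at hi
  | cons p P ih =>
    intro T i hi h
    obtain ⟨r', T', rfl, _, hpre, _, hP⟩ := h
    cases i with
    | zero => exact ⟨r', by simp, hpre⟩
    | succ i' =>
      obtain ⟨r, hr, hp⟩ := ih (by simpa using hi) hP
      exact ⟨r, by simpa using hr, hp⟩
/-- The heads (column 0) of a tableau. -/
def heads (T : List (List ℕ)) : List ℕ := T.filterMap (fun r => r[0]?)

theorem heads_eq_map {T : List (List ℕ)} (h : ∀ r ∈ T, r ≠ []) :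
    heads T = T.map (fun r => r.headD 0) := by
  induction T with
  | nil => rfl
  | cons r T ih =>
    have hr := h r (by simp)
    cases r with
    | nil => exact absurd rfl hr
    | cons z t =>
      have ht := ih (fun s hs => h s (by simp [hs]))
      unfold heads at ht ⊢
      simp only [List.filterMap_cons, List.map_cons, List.getElem?_cons_zero]
      rw [ht]
      simp

theorem headD_transposeT {S : List (List ℕ)} (h : S.headD [] ≠ []) :
    (transposeT S).headD [] = heads S := by
  unfold transposeT
  obtain ⟨l, hl⟩ : ∃ l, (S.headD []).length = l + 1 :=
    ⟨(S.headD []).length - 1, by cases hS : S.headD [] with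
      | nil => exact absurd hS h
      | cons a t => simp⟩
  rw [hl, List.range_succ_eq_map]
  simp [heads]

/-- The list of fixed-point pairs. -/
def fixedpairs (s t : ℕ) : List (ℕ × ℕ) := (List.range' s t).map (fun i => (i+1, i+1))

theorem rBS_fixed (T : List (List ℕ)) (a : ℕ) : rBS T a a = addAtRow T 0 a := by
  simp [rBS]

theorem cBS_fixed (T : List (List ℕ)) (a : ℕ) : cBS T a a = addAtCol T 0 a := by
  simp [cBS]

theorem foldR_fixed_cons : ∀ (t s : ℕ) (r : List ℕ) (rest : List (List ℕ)),
    foldR (r :: rest) (fixedpairs s t) = (r ++ (List.range' s t).map (·+1)) :: rest := by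
  intro t
  induction t with
  | zero => intro s r rest; simp [fixedpairs]
  | succ t ih =>
    intro s r rest
    rw [fixedpairs, List.range'_succ]
    simp only [List.map_cons, List.foldl_cons]
    rw [rBS_fixed, addAtRow_cons_zero]
    rw [show ((List.range' (s+1) t).map (fun i => (i+1,i+1))).foldl
        (fun T p => rBS T p.1 p.2) ((r ++ [s+1]) :: rest) =
        foldR ((r ++ [s+1]) :: rest) (fixedpairs (s+1) t) from rfl, ih]
    simp

theorem foldC_fixed : ∀ (t : ℕ) {T : List (List ℕ)} (s : ℕ), (∀ r ∈ T, r ≠ []) →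
    foldC T (fixedpairs s t) = T ++ (List.range' s t).map (fun i => [i+1]) := by
  intro t
  induction t with
  | zero => intro T s h; simp [fixedpairs]
  | succ t ih =>
    intro T s h
    rw [fixedpairs, List.range'_succ]
    simp only [List.map_cons, List.foldl_cons]
    have hstep : cBS T (s+1) (s+1) = T ++ [[s+1]] := by
      rw [cBS_fixed]
      unfold addAtCol
      rw [List.findIdx_eq_length.mpr ?_]
      · unfold addAtRow
        rw [if_neg (by omega)]
      · intro r hr
        have := h r hr
        simp only [decide_eq_false_iff_not]
        intro hlen
        exact this (List.eq_nil_of_length_eq_zero (by omega))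
    rw [hstep]
    rw [show ((List.range' (s+1) t).map (fun i => (i+1,i+1))).foldl
        (fun T p => cBS T p.1 p.2) (T ++ [[s+1]]) =
        foldC (T ++ [[s+1]]) (fixedpairs (s+1) t) from rfl,
      ih (s+1) ?_]
    · simp
    · intro r hr
      rcases List.mem_append.mp hr with hr | hr
      · exact h r hr
      · simp at hr; simp [hr]

/-- Pair segment of `invPairsFn` over `[s, s+t)`. -/
def seg (f : ℕ → ℕ) (s t : ℕ) : List (ℕ × ℕ) :=
  ((List.range' s t).filter (fun b => decide (f b ≤ b))).map (fun b => (f b + 1, b + 1))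

theorem invPairsFn_eq_seg (f : ℕ → ℕ) (n : ℕ) : invPairsFn f n = seg f 0 n := by
  unfold invPairsFn seg
  rw [List.range_eq_range']

theorem seg_append (f : ℕ → ℕ) (s t₁ t₂ : ℕ) :
    seg f s (t₁ + t₂) = seg f s t₁ ++ seg f (s + t₁) t₂ := by
  unfold seg
  rw [← List.range'_append (s := s) (m := t₁) (n := t₂) (step := 1), List.filter_append, List.map_append]
  simp

theorem seg_fixed {f : ℕ → ℕ} {s t : ℕ} (h : ∀ i, s ≤ i → i < s + t → f i = i) :
    seg f s t = fixedpairs s t := by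
  unfold seg fixedpairs
  have hmem : ∀ i ∈ List.range' s t, s ≤ i ∧ i < s + t := by
    intro i hi
    rw [List.mem_range'] at hi
    obtain ⟨k, hk, rfl⟩ := hi
    omega
  rw [List.filter_eq_self.mpr ?_]
  · refine List.map_congr_left ?_
    intro i hi
    rw [h i (hmem i hi).1 (hmem i hi).2]
  · intro i hi
    rw [h i (hmem i hi).1 (hmem i hi).2]
    simp

theorem seg_single_in {f : ℕ → ℕ} {m : ℕ} (h : f m ≤ m) :
    seg f m 1 = [(f m + 1, m + 1)] := by
  unfold seg
  rw [show List.range' m 1 = [m] from rfl]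
  simp [h]

theorem seg_good {f : ℕ → ℕ} {s t j : ℕ}
    (h : ∀ i, s ≤ i → i < s + t → f i ≤ i → j < f i + 1) :
    GoodL j (seg f s t) := by
  intro p hp
  unfold seg at hp
  rw [List.mem_map] at hp
  obtain ⟨b, hb, rfl⟩ := hp
  rw [List.mem_filter] at hb
  obtain ⟨hbr, hfb⟩ := hb
  rw [List.mem_range'] at hbr
  obtain ⟨k, hk, rfl⟩ := hbr
  simp only [decide_eq_true_eq] at hfb
  exact ⟨h _ (by omega) (by omega) hfb, by omega⟩
theorem map_succ_range' (s t : ℕ) :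
    (List.range' s t).map (·+1) = List.range' (s+1) t := by
  rw [show ((·+1) : ℕ → ℕ) = (fun x => 1 + x) by funext x; omega,
    List.map_add_range']
  rw [Nat.add_comm]

theorem headD_mem {r : List ℕ} (h : r ≠ []) : r.headD 0 ∈ r := by
  cases r with
  | nil => exact absurd rfl h
  | cons z t => simp

theorem patOK_exact {j : ℕ} : ∀ {P : List (List ℕ)}, (∀ r ∈ P, r ≠ []) →
    patOK j P P := by
  intro P
  induction P with
  | nil => intro _ r hr; simp at hr
  | cons p P ih =>
    intro h
    exact ⟨p, P, rfl, h p (by simp), List.prefix_refl _, by simp,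
      ih (fun r hr => h r (by simp [hr]))⟩

theorem patOK_headD_ne_nil {j : ℕ} {p : List ℕ} {P T : List (List ℕ)}
    (h : patOK j (p :: P) T) : T.headD [] ≠ [] := by
  obtain ⟨r, T', rfl, hne, _, _, _⟩ := h
  simpa using hne

theorem patOK_foldC {j : ℕ} {P : List (List ℕ)}
    (hPl : ∀ r ∈ P, ∀ y ∈ r, y ≤ j) :
    ∀ {L : List (ℕ × ℕ)} {T : List (List ℕ)}, GoodL j L → patOK j P T →
    patOK j P (foldC T L) := by
  intro L
  induction L with
  | nil => exact fun _ h => h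
  | cons q L ih =>
    intro T hL h
    obtain ⟨h1, h2⟩ := hL q (by simp)
    exact ih (fun r hr => hL r (by simp [hr])) (patOK_cBS hPl h h1 h2)

theorem foldR_fixed_nil {t : ℕ} (s : ℕ) (ht : 1 ≤ t) :
    foldR [] (fixedpairs s t) = [(List.range' s t).map (·+1)] := by
  obtain ⟨t', rfl⟩ : ∃ t', t = t' + 1 := ⟨t - 1, by omega⟩
  rw [fixedpairs, List.range'_succ]
  simp only [List.map_cons, List.foldl_cons]
  rw [rBS_fixed, addAtRow_nil]
  rw [show ((List.range' (s+1) t').map (fun i => (i+1,i+1))).foldl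
      (fun T p => rBS T p.1 p.2) [[s+1]] =
      foldR [[s+1]] (fixedpairs (s+1) t') from rfl, foldR_fixed_cons]
  simp

theorem seg_split {f : ℕ → ℕ} {s n t u : ℕ} (h : n = t + u) :
    seg f s n = seg f s t ++ seg f (s + t) u := by rw [h, seg_append]

theorem seg_single_out {f : ℕ → ℕ} {m : ℕ} (h : ¬ f m ≤ m) : seg f m 1 = [] := by
  unfold seg
  rw [show List.range' m 1 = [m] from rfl]
  simp [h]

theorem filterMap_col0_singles (l : List ℕ) :
    List.filterMap (fun r => r[0]?) (l.map (fun i => [i+1])) = l.map (·+1) := by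
  rw [List.filterMap_map]
  exact List.filterMap_eq_map_iff_forall_eq_some.mpr (fun i _ => rfl) ▸ rfl

theorem filterMap_col1_singles (l : List ℕ) :
    List.filterMap (fun r => r[1]?) (l.map (fun i => [i+1])) = [] := by
  rw [List.filterMap_map]
  apply List.filterMap_eq_nil_iff.mpr
  intro i _
  rfl

/-- Backward direction: the identity. -/
theorem backward_id {f : ℕ → ℕ} {n : ℕ} (hf : ∀ i < n, f i = i) :
    PrBSfn f n = transposeT (PcBSfn f n) := by
  have hp : invPairsFn f n = fixedpairs 0 n := by
    rw [invPairsFn_eq_seg, seg_fixed (by intro i _ h2; exact hf i (by omega))]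
  cases n with
  | zero =>
    have : invPairsFn f 0 = [] := by rw [hp]; rfl
    rw [PrBSfn, PcBSfn, this]
    rfl
  | succ m =>
    have h1 : PrBSfn f (m+1) = [List.range' 1 (m+1)] := by
      rw [PrBSfn, hp]
      show foldR [] (fixedpairs 0 (m+1)) = _
      rw [foldR_fixed_nil 0 (by omega), map_succ_range']
    have h2 : PcBSfn f (m+1) = (List.range' 0 (m+1)).map (fun i => [i+1]) := by
      rw [PcBSfn, hp]
      show foldC [] (fixedpairs 0 (m+1)) = _
      rw [foldC_fixed _ 0 (by simp)]
      simp
    have hh : ((List.range' 0 (m+1)).map (fun i => [i+1])).headD [] = [1] := by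
      rw [List.range'_succ]; simp
    rw [h1, h2]
    unfold transposeT
    rw [hh, show List.range ([1] : List ℕ).length = [0] from rfl]
    simp only [List.map_cons, List.map_nil]
    rw [filterMap_col0_singles, map_succ_range']

/-- Backward direction: the simple transposition `(1,2)`. -/
theorem backward_swap {f : ℕ → ℕ} {n : ℕ} (hn : 2 ≤ n) (h0 : f 0 = 1) (h1 : f 1 = 0)
    (hf : ∀ i, 2 ≤ i → i < n → f i = i) :
    PrBSfn f n = transposeT (PcBSfn f n) := by
  have hp : invPairsFn f n = (1, 2) :: fixedpairs 2 (n - 2) := by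
    rw [invPairsFn_eq_seg, seg_split (show n = 1 + (n - 1) by omega),
      seg_split (show n - 1 = 1 + (n - 2) by omega)]
    norm_num
    rw [seg_single_out (by omega), seg_single_in (show f 1 ≤ 1 by omega),
      seg_fixed (by intro i h2 h3; exact hf i (by omega) (by omega))]
    simp [h1]
  have hrBS0 : rBS [] 1 2 = [[1], [2]] := by decide
  have hcBS0 : cBS [] 1 2 = [[1, 2]] := by decide
  have h1' : PrBSfn f n = [1 :: List.range' 3 (n-2), [2]] := by
    rw [PrBSfn, hp, List.foldl_cons]
    show foldR (rBS [] 1 2) (fixedpairs 2 (n-2)) = _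
    rw [hrBS0, foldR_fixed_cons, map_succ_range']
    simp
  have h2' : PcBSfn f n = [1, 2] :: (List.range' 2 (n-2)).map (fun i => [i+1]) := by
    rw [PcBSfn, hp, List.foldl_cons]
    show foldC (cBS [] 1 2) (fixedpairs 2 (n-2)) = _
    rw [hcBS0, foldC_fixed _ 2 (by simp)]
    simp
  rw [h1', h2']
  unfold transposeT
  simp only [List.headD_cons, List.length_cons, List.length_nil]
  rw [show List.range (0 + 1 + 1) = [0, 1] by decide]
  simp only [List.map_cons, List.map_nil, List.filterMap_cons]
  rw [filterMap_col0_singles, filterMap_col1_singles, map_succ_range']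
  simp
/-- If row 0 of `A` has the small value `j` at index `c`, while the pattern of `S`
has length `≤ c` (so column 0 of `S` below the pattern has only entries `> j`),
then `A ≠ S^⊤`. -/
theorem differ_small_left {A S : List (List ℕ)} {j c : ℕ} {P : List (List ℕ)}
    (hA : (A.headD [])[c]? = some j) (hP : P ≠ []) (hS : patOK j P S)
    (hlen : P.length ≤ c) : A ≠ transposeT S := by
  intro h
  obtain ⟨p₀, P', rfl⟩ : ∃ p₀ P', P = p₀ :: P' := by
    cases P with
    | nil => exact absurd rfl hP
    | cons a b => exact ⟨a, b, rfl⟩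
  have hSh : S.headD [] ≠ [] := patOK_headD_ne_nil hS
  have hhead : A.headD [] = heads S := by rw [h, headD_transposeT hSh]
  rw [hhead, heads_eq_map (patOK_ne_nil hS), List.getElem?_map] at hA
  cases hx : S[c]? with
  | none => rw [hx] at hA; simp at hA
  | some r =>
    rw [hx] at hA
    simp only [Option.map_some] at hA
    have hrne : r ≠ [] := patOK_ne_nil hS r (List.mem_of_getElem? hx)
    have : j < r.headD 0 := patOK_ge hS hlen hx _ (headD_mem hrne)
    rw [Option.some.injEq] at hA
    omega

/-- If the pattern of `S` has a row starting with `v` at index `c`, while row 0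
of `A` has no entry or an entry `> v` at index `c`, then `A ≠ S^⊤`. -/
theorem differ_small_right {A S : List (List ℕ)} {j v c : ℕ} {P : List (List ℕ)}
    (hA : ∀ y, (A.headD [])[c]? = some y → v < y)
    (hS : patOK j P S) (hc : c < P.length) (hv : ∃ t, P[c] = v :: t) :
    A ≠ transposeT S := by
  intro h
  obtain ⟨p₀, P', rfl⟩ : ∃ p₀ P', P = p₀ :: P' := by
    cases P with
    | nil => simp at hc
    | cons a b => exact ⟨a, b, rfl⟩
  have hSh : S.headD [] ≠ [] := patOK_headD_ne_nil hS
  have hhead : A.headD [] = heads S := by rw [h, headD_transposeT hSh]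
  obtain ⟨r, hr, hpre⟩ := patOK_lt hc hS
  obtain ⟨t, ht⟩ := hv
  obtain ⟨e, he⟩ := hpre
  rw [ht] at he
  have : (A.headD [])[c]? = some v := by
    rw [hhead, heads_eq_map (patOK_ne_nil hS), List.getElem?_map, hr, ← he]
    simp
  have := hA v this
  omega

theorem foldR_append (T : List (List ℕ)) (L₁ L₂ : List (ℕ × ℕ)) :
    foldR T (L₁ ++ L₂) = foldR (foldR T L₁) L₂ := List.foldl_append

theorem foldR_cons (T : List (List ℕ)) (q : ℕ × ℕ) (L : List (ℕ × ℕ)) :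
    foldR T (q :: L) = foldR (rBS T q.1 q.2) L := rfl

theorem foldC_append (T : List (List ℕ)) (L₁ L₂ : List (ℕ × ℕ)) :
    foldC T (L₁ ++ L₂) = foldC (foldC T L₁) L₂ := List.foldl_append

theorem foldC_cons (T : List (List ℕ)) (q : ℕ × ℕ) (L : List (ℕ × ℕ)) :
    foldC T (q :: L) = foldC (cBS T q.1 q.2) L := rfl

/-- Forward direction, case A: `w` fixes `1, …, k` (`k ≥ 1`) and moves `k+1`. -/
theorem forward_A {f : ℕ → ℕ} {n k m : ℕ} (hk : 1 ≤ k) (hkm : k < m) (hmn : m < n)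
    (hfix : ∀ i < k, f i = i) (hfm : f m = k)
    (hbig1 : ∀ i, k ≤ i → i < m → f i ≤ i → k + 1 ≤ f i)
    (hbig2 : ∀ i, m < i → i < n → f i ≤ i → k + 1 ≤ f i) :
    PrBSfn f n ≠ transposeT (PcBSfn f n) := by
  set j := k + 1 with hj
  set L₁ := seg f k (m - k) with hL₁
  set L₂ := seg f (m+1) (n - m - 1) with hL₂
  have hsplit : invPairsFn f n =
      fixedpairs 0 k ++ (L₁ ++ ((j, m+1) :: L₂)) := by
    have e0 : seg f 0 n = seg f 0 k ++ seg f k (n - k) := by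
      have := seg_split (f := f) (s := 0) (show n = k + (n - k) by omega)
      simpa using this
    have e1 : seg f k (n - k) = L₁ ++ seg f m (n - m) := by
      have := seg_split (f := f) (s := k) (show n - k = (m - k) + (n - m) by omega)
      rw [show k + (m - k) = m by omega] at this
      exact this
    have e2 : seg f m (n - m) = seg f m 1 ++ L₂ := by
      exact seg_split (show n - m = 1 + (n - m - 1) by omega)
    have e3 : seg f m 1 = [(j, m+1)] := by
      rw [seg_single_in (show f m ≤ m by omega), hfm]
    have e4 : seg f 0 k = fixedpairs 0 k := by
      exact seg_fixed (fun i h1 h2 => hfix i (by omega))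
    rw [invPairsFn_eq_seg, e0, e1, e2, e3, e4]
    simp
  have g1 : GoodL j L₁ := by
    rw [hL₁]
    refine seg_good (fun i h1 h2 h3 => ?_)
    have := hbig1 i h1 (by omega) h3
    omega
  have g2 : GoodL j L₂ := by
    rw [hL₂]
    refine seg_good (fun i h1 h2 h3 => ?_)
    have := hbig2 i (by omega) (by omega) h3
    omega
  set p := List.range' 1 k with hpdef
  have hplen : p.length = k := List.length_range'
  have hple : ∀ y ∈ p, y ≤ j := by
    intro y hy
    rw [hpdef, List.mem_range'] at hy
    obtain ⟨i, hi, rfl⟩ := hy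
    omega
  -- row Beissinger side
  have hPr : PrBSfn f n =
      foldR (rBS (foldR (foldR [] (fixedpairs 0 k)) L₁) j (m+1)) L₂ := by
    rw [PrBSfn, hsplit]
    show foldR [] (fixedpairs 0 k ++ (L₁ ++ ((j, m+1) :: L₂))) = _
    rw [foldR_append, foldR_append, foldR_cons]
  have hT0 : foldR [] (fixedpairs 0 k) = [p] := by
    rw [foldR_fixed_nil 0 hk, map_succ_range']
  obtain ⟨e₁, hrow1, he1⟩ := row0_phase g1 (T := [p]) (p := p) (e := [])
    hple (by simp) (by simp)
  have hspec := row0_special (T := foldR [p] L₁) hple hrow1 he1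
    (show j ≠ m + 1 by omega)
  obtain ⟨e₂, hrow2, he2⟩ := row0_phase g2 (T := rBS (foldR [p] L₁) j (m+1))
    (p := p ++ [j]) (e := e₁.tail)
    (by intro y hy
        rcases List.mem_append.mp hy with hy | hy
        · exact hple y hy
        · simp at hy; omega)
    (by rw [hspec, List.append_assoc]; rfl)
    (fun y hy => he1 y (List.mem_of_mem_tail hy))
  have hrowfinal : ((PrBSfn f n).headD [])[k]? = some j := by
    rw [hPr, hT0, hrow2,
      List.getElem?_append_left (by rw [List.length_append, hplen]; simp),
      List.getElem?_append_right (by omega), hplen]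
    simp
  -- column Beissinger side
  set P₀ := (List.range' 2 (k-1)).map (fun v => ([v] : List ℕ)) with hP₀def
  have hrange1 : List.range' 1 k = 1 :: List.range' 2 (k-1) := by
    rw [show k = (k-1) + 1 by omega, List.range'_succ]
    simp
  have hC0 : foldC [] (fixedpairs 0 k) = [1] :: P₀ := by
    rw [foldC_fixed _ 0 (by simp), List.nil_append]
    rw [show (List.range' 0 k).map (fun i => ([i+1] : List ℕ)) =
      ((List.range' 0 k).map (·+1)).map (fun v => ([v] : List ℕ)) by
        rw [List.map_map]; rfl, map_succ_range']
    rw [show (0:ℕ) + 1 = 1 from rfl, hrange1]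
    simp
    rfl
  have hPl0 : ∀ r ∈ ([1] :: P₀ : List (List ℕ)), ∀ y ∈ r, y ≤ j := by
    intro r hr y hy
    rcases List.mem_cons.mp hr with rfl | hr
    · simp at hy; omega
    · rw [hP₀def, List.mem_map] at hr
      obtain ⟨v, hv, rfl⟩ := hr
      rw [List.mem_range'] at hv
      obtain ⟨i, hi, rfl⟩ := hv
      simp at hy
      omega
  have hpat0 : patOK j ([1] :: P₀) ([1] :: P₀) := by
    refine patOK_exact ?_
    intro r hr
    rcases List.mem_cons.mp hr with rfl | hr
    · simp
    · rw [hP₀def, List.mem_map] at hr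
      obtain ⟨v, _, rfl⟩ := hr
      simp
  have hPc : PcBSfn f n =
      foldC (cBS (foldC (foldC [] (fixedpairs 0 k)) L₁) j (m+1)) L₂ := by
    rw [PcBSfn, hsplit]
    show foldC [] (fixedpairs 0 k ++ (L₁ ++ ((j, m+1) :: L₂))) = _
    rw [foldC_append, foldC_append, foldC_cons]
  have hpat1 : patOK j ([1] :: P₀) (foldC ([1] :: P₀) L₁) :=
    patOK_foldC hPl0 g1 hpat0
  have hpat2 : patOK j (([1] ++ [j]) :: P₀) (cBS (foldC ([1] :: P₀) L₁) j (m+1)) :=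
    patOK_cBS_special hpat1 (by intro y hy; simp at hy; omega)
      (fun r hr => hPl0 r (by simp [hr])) (by omega)
  have hpat3 : patOK j (([1] ++ [j]) :: P₀) (PcBSfn f n) := by
    rw [hPc, hC0]
    refine patOK_foldC ?_ g2 hpat2
    intro r hr y hy
    rcases List.mem_cons.mp hr with rfl | hr
    · simp at hy; omega
    · exact hPl0 r (by simp [hr]) y hy
  refine differ_small_left hrowfinal (by simp) hpat3 ?_
  rw [List.length_cons, hP₀def, List.length_map, List.length_range']
  omega
theorem patOK_nil_nil {j : ℕ} : patOK j [] [] := by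
  intro r hr; simp at hr

theorem row0_insert_min {T : List (List ℕ)} {x b : ℕ}
    (hall : ∀ y ∈ T.headD [], x < y) (hb : x ≠ b) :
    (rBS T x b).headD [] = x :: (T.headD []).tail := by
  rw [headD_rBS, if_neg hb, insertRow_all_big hall]

/-- Forward direction, case C: `w` swaps `1,2`, fixes `3, …, k`, moves `k+1`. -/
theorem forward_C {f : ℕ → ℕ} {n k m : ℕ} (hk : 2 ≤ k) (hkm : k < m) (hmn : m < n)
    (hf0 : f 0 = 1) (hf1 : f 1 = 0)
    (hfix : ∀ i, 2 ≤ i → i < k → f i = i) (hfm : f m = k)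
    (hbig1 : ∀ i, k ≤ i → i < m → f i ≤ i → k + 1 ≤ f i)
    (hbig2 : ∀ i, m < i → i < n → f i ≤ i → k + 1 ≤ f i) :
    PrBSfn f n ≠ transposeT (PcBSfn f n) := by
  set j := k + 1 with hj
  set L₁ := seg f k (m - k) with hL₁
  set L₂ := seg f (m+1) (n - m - 1) with hL₂
  have hsplit : invPairsFn f n =
      (1, 2) :: (fixedpairs 2 (k-2) ++ (L₁ ++ ((j, m+1) :: L₂))) := by
    have e0 : seg f 0 n = seg f 0 1 ++ seg f 1 (n - 1) := by
      have := seg_split (f := f) (s := 0) (show n = 1 + (n - 1) by omega)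
      simpa using this
    have e1 : seg f 1 (n - 1) = seg f 1 1 ++ seg f 2 (n - 2) := by
      have := seg_split (f := f) (s := 1) (show n - 1 = 1 + (n - 2) by omega)
      rw [show (1:ℕ) + 1 = 2 from rfl] at this
      exact this
    have e2 : seg f 2 (n - 2) = seg f 2 (k - 2) ++ seg f k (n - k) := by
      have := seg_split (f := f) (s := 2) (show n - 2 = (k - 2) + (n - k) by omega)
      rw [show 2 + (k - 2) = k by omega] at this
      exact this
    have e3 : seg f k (n - k) = L₁ ++ seg f m (n - m) := by
      have := seg_split (f := f) (s := k) (show n - k = (m - k) + (n - m) by omega)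
      rw [show k + (m - k) = m by omega] at this
      exact this
    have e4 : seg f m (n - m) = seg f m 1 ++ L₂ :=
      seg_split (show n - m = 1 + (n - m - 1) by omega)
    have e5 : seg f m 1 = [(j, m+1)] := by
      rw [seg_single_in (show f m ≤ m by omega), hfm]
    have e6 : seg f 0 1 = [] := seg_single_out (by omega)
    have e7 : seg f 1 1 = [(1, 2)] := by
      rw [seg_single_in (show f 1 ≤ 1 by omega), hf1]
    have e8 : seg f 2 (k - 2) = fixedpairs 2 (k-2) :=
      seg_fixed (fun i h1 h2 => hfix i (by omega) (by omega))
    rw [invPairsFn_eq_seg, e0, e1, e2, e3, e4, e5, e6, e7, e8]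
    simp
  have g1 : GoodL j L₁ := by
    rw [hL₁]
    refine seg_good (fun i h1 h2 h3 => ?_)
    have := hbig1 i h1 (by omega) h3
    omega
  have g2 : GoodL j L₂ := by
    rw [hL₂]
    refine seg_good (fun i h1 h2 h3 => ?_)
    have := hbig2 i (by omega) (by omega) h3
    omega
  set p := 1 :: List.range' 3 (k-2) with hpdef
  have hplen : p.length = k - 1 := by
    rw [hpdef, List.length_cons, List.length_range']
    omega
  have hple : ∀ y ∈ p, y ≤ j := by
    intro y hy
    rcases List.mem_cons.mp hy with rfl | hy
    · omega
    · rw [List.mem_range'] at hy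
      obtain ⟨i, hi, rfl⟩ := hy
      omega
  -- row Beissinger side
  have hPr : PrBSfn f n =
      foldR (rBS (foldR (foldR (rBS [] 1 2) (fixedpairs 2 (k-2))) L₁) j (m+1)) L₂ := by
    rw [PrBSfn, hsplit]
    show foldR [] ((1,2) :: (fixedpairs 2 (k-2) ++ (L₁ ++ ((j, m+1) :: L₂)))) = _
    rw [foldR_cons, foldR_append, foldR_append, foldR_cons]
  have hrBS0 : rBS [] 1 2 = [[1], [2]] := by decide
  have hT0 : foldR (rBS [] 1 2) (fixedpairs 2 (k-2)) = [p, [2]] := by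
    rw [hrBS0, foldR_fixed_cons, map_succ_range', hpdef]
    simp
  obtain ⟨e₁, hrow1, he1⟩ := row0_phase g1 (T := [p, [2]]) (p := p) (e := [])
    hple (by simp) (by simp)
  have hspec := row0_special (T := foldR [p, [2]] L₁) hple hrow1 he1
    (show j ≠ m + 1 by omega)
  obtain ⟨e₂, hrow2, he2⟩ := row0_phase g2 (T := rBS (foldR [p, [2]] L₁) j (m+1))
    (p := p ++ [j]) (e := e₁.tail)
    (by intro y hy
        rcases List.mem_append.mp hy with hy | hy
        · exact hple y hy
        · simp at hy; omega)
    (by rw [hspec, List.append_assoc]; rfl)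
    (fun y hy => he1 y (List.mem_of_mem_tail hy))
  have hrowfinal : ((PrBSfn f n).headD [])[k-1]? = some j := by
    rw [hPr, hT0, hrow2,
      List.getElem?_append_left (by rw [List.length_append, hplen, List.length_singleton]; omega),
      List.getElem?_append_right (by omega), hplen]
    simp
  -- column Beissinger side
  set P₀ := (List.range' 3 (k-2)).map (fun v => ([v] : List ℕ)) with hP₀def
  have hcBS0 : cBS [] 1 2 = [[1, 2]] := by decide
  have hC0 : foldC (cBS [] 1 2) (fixedpairs 2 (k-2)) = [1, 2] :: P₀ := by
    rw [hcBS0, foldC_fixed _ 2 (by simp)]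
    rw [show (List.range' 2 (k-2)).map (fun i => ([i+1] : List ℕ)) =
      ((List.range' 2 (k-2)).map (·+1)).map (fun v => ([v] : List ℕ)) by
        rw [List.map_map]; rfl, map_succ_range']
    simp
    rfl
  have hPl0 : ∀ r ∈ ([1, 2] :: P₀ : List (List ℕ)), ∀ y ∈ r, y ≤ j := by
    intro r hr y hy
    rcases List.mem_cons.mp hr with rfl | hr
    · simp at hy; omega
    · rw [hP₀def, List.mem_map] at hr
      obtain ⟨v, hv, rfl⟩ := hr
      rw [List.mem_range'] at hv
      obtain ⟨i, hi, rfl⟩ := hv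
      simp at hy
      omega
  have hpat0 : patOK j ([1, 2] :: P₀) ([1, 2] :: P₀) := by
    refine patOK_exact ?_
    intro r hr
    rcases List.mem_cons.mp hr with rfl | hr
    · simp
    · rw [hP₀def, List.mem_map] at hr
      obtain ⟨v, _, rfl⟩ := hr
      simp
  have hPc : PcBSfn f n =
      foldC (cBS (foldC (foldC (cBS [] 1 2) (fixedpairs 2 (k-2))) L₁) j (m+1)) L₂ := by
    rw [PcBSfn, hsplit]
    show foldC [] ((1,2) :: (fixedpairs 2 (k-2) ++ (L₁ ++ ((j, m+1) :: L₂)))) = _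
    rw [foldC_cons, foldC_append, foldC_append, foldC_cons]
  have hpat1 : patOK j ([1, 2] :: P₀) (foldC ([1,2] :: P₀) L₁) :=
    patOK_foldC hPl0 g1 hpat0
  have hpat2 : patOK j (([1, 2] ++ [j]) :: P₀)
      (cBS (foldC ([1,2] :: P₀) L₁) j (m+1)) :=
    patOK_cBS_special hpat1 (by intro y hy; simp at hy; omega)
      (fun r hr => hPl0 r (by simp [hr])) (by omega)
  have hpat3 : patOK j (([1, 2] ++ [j]) :: P₀) (PcBSfn f n) := by
    rw [hPc, hC0]
    refine patOK_foldC ?_ g2 hpat2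
    intro r hr y hy
    rcases List.mem_cons.mp hr with rfl | hr
    · simp at hy; omega
    · exact hPl0 r (by simp [hr]) y hy
  refine differ_small_left hrowfinal (by simp) hpat3 ?_
  rw [List.length_cons, hP₀def, List.length_map, List.length_range']
  omega
/-- Forward direction, case B1: `f 0 = m₀ ≥ 2`, `f 1 = 1`. -/
theorem forward_B1 {f : ℕ → ℕ} {n m₀ : ℕ} (hm : 2 ≤ m₀) (hmn : m₀ < n)
    (hf0 : f 0 = m₀) (hf1 : f 1 = 1) (hfm : f m₀ = 0)
    (hbig1 : ∀ i, 2 ≤ i → i < m₀ → f i ≤ i → 2 ≤ f i)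
    (hbig2 : ∀ i, m₀ < i → i < n → f i ≤ i → 2 ≤ f i) :
    PrBSfn f n ≠ transposeT (PcBSfn f n) := by
  set L₁ := seg f 2 (m₀ - 2) with hL₁
  set L₂ := seg f (m₀+1) (n - m₀ - 1) with hL₂
  have hsplit : invPairsFn f n = (2, 2) :: (L₁ ++ ((1, m₀+1) :: L₂)) := by
    have e0 : seg f 0 n = seg f 0 1 ++ seg f 1 (n - 1) := by
      have := seg_split (f := f) (s := 0) (show n = 1 + (n - 1) by omega)
      simpa using this
    have e1 : seg f 1 (n - 1) = seg f 1 1 ++ seg f 2 (n - 2) := by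
      have := seg_split (f := f) (s := 1) (show n - 1 = 1 + (n - 2) by omega)
      rw [show (1:ℕ) + 1 = 2 from rfl] at this
      exact this
    have e2 : seg f 2 (n - 2) = L₁ ++ seg f m₀ (n - m₀) := by
      have := seg_split (f := f) (s := 2) (show n - 2 = (m₀ - 2) + (n - m₀) by omega)
      rw [show 2 + (m₀ - 2) = m₀ by omega] at this
      exact this
    have e3 : seg f m₀ (n - m₀) = seg f m₀ 1 ++ L₂ :=
      seg_split (show n - m₀ = 1 + (n - m₀ - 1) by omega)
    have e4 : seg f m₀ 1 = [(1, m₀+1)] := by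
      rw [seg_single_in (show f m₀ ≤ m₀ by omega), hfm]
    have e5 : seg f 0 1 = [] := seg_single_out (by omega)
    have e6 : seg f 1 1 = [(2, 2)] := by
      rw [seg_single_in (show f 1 ≤ 1 by omega), hf1]
    rw [invPairsFn_eq_seg, e0, e1, e2, e3, e4, e5, e6]
    simp
  have g1 : GoodL 2 L₁ := by
    rw [hL₁]
    refine seg_good (fun i h1 h2 h3 => ?_)
    have := hbig1 i h1 (by omega) h3
    omega
  have g2 : GoodL 2 L₂ := by
    rw [hL₂]
    refine seg_good (fun i h1 h2 h3 => ?_)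
    have := hbig2 i (by omega) (by omega) h3
    omega
  -- row Beissinger side
  have hPr : PrBSfn f n = foldR (rBS (foldR (rBS [] 2 2) L₁) 1 (m₀+1)) L₂ := by
    rw [PrBSfn, hsplit]
    show foldR [] ((2,2) :: (L₁ ++ ((1, m₀+1) :: L₂))) = _
    rw [foldR_cons, foldR_append, foldR_cons]
  have hT0 : rBS [] 2 2 = [[2]] := by decide
  obtain ⟨e₁, hrow1, he1⟩ := row0_phase (j := 2) g1 (T := [[2]]) (p := [2]) (e := [])
    (by simp) (by simp) (by simp)
  have hall1 : ∀ y ∈ (foldR [[2]] L₁).headD [], 1 < y := by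
    rw [hrow1]
    intro y hy
    rcases List.mem_append.mp hy with hy | hy
    · simp at hy; omega
    · have := he1 y hy; omega
  have hspec : (rBS (foldR [[2]] L₁) 1 (m₀+1)).headD [] = 1 :: e₁ := by
    rw [row0_insert_min hall1 (show (1:ℕ) ≠ m₀ + 1 by omega), hrow1]
    rfl
  obtain ⟨e₂, hrow2, he2⟩ := row0_phase (j := 2) g2
    (T := rBS (foldR [[2]] L₁) 1 (m₀+1)) (p := [1]) (e := e₁)
    (by simp) (by rw [hspec]; rfl) he1
  -- column Beissinger side
  have hPc : PcBSfn f n = foldC (cBS (foldC (cBS [] 2 2) L₁) 1 (m₀+1)) L₂ := by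
    rw [PcBSfn, hsplit]
    show foldC [] ((2,2) :: (L₁ ++ ((1, m₀+1) :: L₂))) = _
    rw [foldC_cons, foldC_append, foldC_cons]
  have hC0 : cBS [] 2 2 = [[2]] := by decide
  have hpat0 : patOK 2 [[2]] ([[2]] : List (List ℕ)) := patOK_exact (by simp)
  have hpat1 : patOK 2 [[2]] (foldC [[2]] L₁) :=
    patOK_foldC (by simp) g1 hpat0
  have hpat2 : patOK 2 [[1], [2]] (cBS (foldC [[2]] L₁) 1 (m₀+1)) :=
    patOK_cBS_two hpat1 (by omega) (by omega) (by omega)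
  have hpat3 : patOK 2 [[1], [2]] (PcBSfn f n) := by
    rw [hPc, hC0]
    refine patOK_foldC ?_ g2 hpat2
    intro r hr y hy
    simp at hr
    rcases hr with rfl | rfl <;> simp at hy <;> omega
  refine differ_small_right (v := 2) (c := 1) ?_ hpat3 (by simp) ⟨[], rfl⟩
  intro y hy
  rw [hPr, hT0, hrow2] at hy
  simp only [List.cons_append, List.nil_append, List.getElem?_cons_succ] at hy
  exact he2 y (List.mem_of_getElem? hy)

/-- Forward direction, case B2: `f 0 = m₀`, `f 1 = m₁`, `2 ≤ m₁ < m₀`. -/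
theorem forward_B2 {f : ℕ → ℕ} {n m₀ m₁ : ℕ} (hm1 : 2 ≤ m₁) (hmm : m₁ < m₀)
    (hmn : m₀ < n) (hf0 : f 0 = m₀) (hf1 : f 1 = m₁) (hfm0 : f m₀ = 0)
    (hfm1 : f m₁ = 1)
    (hbig0 : ∀ i, 2 ≤ i → i < m₁ → f i ≤ i → 2 ≤ f i)
    (hbig1 : ∀ i, m₁ < i → i < m₀ → f i ≤ i → 2 ≤ f i)
    (hbig2 : ∀ i, m₀ < i → i < n → f i ≤ i → 2 ≤ f i) :
    PrBSfn f n ≠ transposeT (PcBSfn f n) := by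
  set L₀ := seg f 2 (m₁ - 2) with hL₀
  set L₁ := seg f (m₁+1) (m₀ - m₁ - 1) with hL₁
  set L₂ := seg f (m₀+1) (n - m₀ - 1) with hL₂
  have hsplit : invPairsFn f n =
      L₀ ++ ((2, m₁+1) :: (L₁ ++ ((1, m₀+1) :: L₂))) := by
    have e0 : seg f 0 n = seg f 0 1 ++ seg f 1 (n - 1) := by
      have := seg_split (f := f) (s := 0) (show n = 1 + (n - 1) by omega)
      simpa using this
    have e1 : seg f 1 (n - 1) = seg f 1 1 ++ seg f 2 (n - 2) := by
      have := seg_split (f := f) (s := 1) (show n - 1 = 1 + (n - 2) by omega)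
      rw [show (1:ℕ) + 1 = 2 from rfl] at this
      exact this
    have e2 : seg f 2 (n - 2) = L₀ ++ seg f m₁ (n - m₁) := by
      have := seg_split (f := f) (s := 2) (show n - 2 = (m₁ - 2) + (n - m₁) by omega)
      rw [show 2 + (m₁ - 2) = m₁ by omega] at this
      exact this
    have e3 : seg f m₁ (n - m₁) = seg f m₁ 1 ++ seg f (m₁+1) (n - m₁ - 1) :=
      seg_split (show n - m₁ = 1 + (n - m₁ - 1) by omega)
    have e4 : seg f (m₁+1) (n - m₁ - 1) = L₁ ++ seg f m₀ (n - m₀) := by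
      have := seg_split (f := f) (s := m₁+1)
        (show n - m₁ - 1 = (m₀ - m₁ - 1) + (n - m₀) by omega)
      rw [show m₁ + 1 + (m₀ - m₁ - 1) = m₀ by omega] at this
      exact this
    have e5 : seg f m₀ (n - m₀) = seg f m₀ 1 ++ L₂ :=
      seg_split (show n - m₀ = 1 + (n - m₀ - 1) by omega)
    have e6 : seg f m₀ 1 = [(1, m₀+1)] := by
      rw [seg_single_in (show f m₀ ≤ m₀ by omega), hfm0]
    have e7 : seg f m₁ 1 = [(2, m₁+1)] := by
      rw [seg_single_in (show f m₁ ≤ m₁ by omega), hfm1]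
    have e8 : seg f 0 1 = [] := seg_single_out (by omega)
    have e9 : seg f 1 1 = [] := seg_single_out (by omega)
    rw [invPairsFn_eq_seg, e0, e1, e2, e3, e4, e5, e6, e7, e8, e9]
    simp
  have g0 : GoodL 2 L₀ := by
    rw [hL₀]
    refine seg_good (fun i h1 h2 h3 => ?_)
    have := hbig0 i h1 (by omega) h3
    omega
  have g1 : GoodL 2 L₁ := by
    rw [hL₁]
    refine seg_good (fun i h1 h2 h3 => ?_)
    have := hbig1 i (by omega) (by omega) h3
    omega
  have g2 : GoodL 2 L₂ := by
    rw [hL₂]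
    refine seg_good (fun i h1 h2 h3 => ?_)
    have := hbig2 i (by omega) (by omega) h3
    omega
  -- row Beissinger side
  have hPr : PrBSfn f n =
      foldR (rBS (foldR (rBS (foldR [] L₀) 2 (m₁+1)) L₁) 1 (m₀+1)) L₂ := by
    rw [PrBSfn, hsplit]
    show foldR [] (L₀ ++ ((2, m₁+1) :: (L₁ ++ ((1, m₀+1) :: L₂)))) = _
    rw [foldR_append, foldR_cons, foldR_append, foldR_cons]
  obtain ⟨e₀, hrow0, he0⟩ := row0_phase (j := 2) g0 (T := []) (p := []) (e := [])
    (by simp) (by simp) (by simp)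
  have hall0 : ∀ y ∈ (foldR [] L₀).headD [], 2 < y := by
    rw [hrow0]
    intro y hy
    simp only [List.nil_append] at hy
    exact he0 y hy
  have hspec0 : (rBS (foldR [] L₀) 2 (m₁+1)).headD [] = 2 :: e₀.tail := by
    rw [row0_insert_min hall0 (show (2:ℕ) ≠ m₁ + 1 by omega), hrow0]
    rfl
  obtain ⟨e₁, hrow1, he1⟩ := row0_phase (j := 2) g1
    (T := rBS (foldR [] L₀) 2 (m₁+1)) (p := [2]) (e := e₀.tail)
    (by simp) (by rw [hspec0]; rfl)
    (fun y hy => he0 y (List.mem_of_mem_tail hy))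
  have hall1 : ∀ y ∈ (foldR (rBS (foldR [] L₀) 2 (m₁+1)) L₁).headD [], 1 < y := by
    rw [hrow1]
    intro y hy
    rcases List.mem_append.mp hy with hy | hy
    · simp at hy; omega
    · have := he1 y hy; omega
  have hspec1 : (rBS (foldR (rBS (foldR [] L₀) 2 (m₁+1)) L₁) 1 (m₀+1)).headD []
      = 1 :: e₁ := by
    rw [row0_insert_min hall1 (show (1:ℕ) ≠ m₀ + 1 by omega), hrow1]
    rfl
  obtain ⟨e₂, hrow2, he2⟩ := row0_phase (j := 2) g2
    (T := rBS (foldR (rBS (foldR [] L₀) 2 (m₁+1)) L₁) 1 (m₀+1)) (p := [1]) (e := e₁)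
    (by simp) (by rw [hspec1]; rfl) he1
  -- column Beissinger side
  have hPc : PcBSfn f n =
      foldC (cBS (foldC (cBS (foldC [] L₀) 2 (m₁+1)) L₁) 1 (m₀+1)) L₂ := by
    rw [PcBSfn, hsplit]
    show foldC [] (L₀ ++ ((2, m₁+1) :: (L₁ ++ ((1, m₀+1) :: L₂)))) = _
    rw [foldC_append, foldC_cons, foldC_append, foldC_cons]
  have hpat0 : patOK 2 [] (foldC [] L₀) :=
    patOK_foldC (by simp) g0 patOK_nil_nil
  have hpat1 : patOK 2 [[2]] (cBS (foldC [] L₀) 2 (m₁+1)) :=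
    patOK_cBS_small hpat0 (by omega) (by omega)
  have hpat2 : patOK 2 [[2]] (foldC (cBS (foldC [] L₀) 2 (m₁+1)) L₁) :=
    patOK_foldC (by simp) g1 hpat1
  have hpat3 : patOK 2 [[1], [2]]
      (cBS (foldC (cBS (foldC [] L₀) 2 (m₁+1)) L₁) 1 (m₀+1)) :=
    patOK_cBS_two hpat2 (by omega) (by omega) (by omega)
  have hpat4 : patOK 2 [[1], [2]] (PcBSfn f n) := by
    rw [hPc]
    refine patOK_foldC ?_ g2 hpat3
    intro r hr y hy
    simp at hr
    rcases hr with rfl | rfl <;> simp at hy <;> omega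
  refine differ_small_right (v := 2) (c := 1) ?_ hpat4 (by simp) ⟨[], rfl⟩
  intro y hy
  rw [hPr, hrow2] at hy
  simp only [List.cons_append, List.nil_append, List.getElem?_cons_succ] at hy
  exact he2 y (List.mem_of_getElem? hy)

/-- Forward direction, case B3: `f 0 = m₀`, `f 1 = m₁`, `2 ≤ m₀ < m₁`. -/
theorem forward_B3 {f : ℕ → ℕ} {n m₀ m₁ : ℕ} (hm0 : 2 ≤ m₀) (hmm : m₀ < m₁)
    (hmn : m₁ < n) (hf0 : f 0 = m₀) (hf1 : f 1 = m₁) (hfm0 : f m₀ = 0)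
    (hfm1 : f m₁ = 1)
    (hbig0 : ∀ i, 2 ≤ i → i < m₀ → f i ≤ i → 2 ≤ f i)
    (hbig1 : ∀ i, m₀ < i → i < m₁ → f i ≤ i → 2 ≤ f i)
    (hbig2 : ∀ i, m₁ < i → i < n → f i ≤ i → 2 ≤ f i) :
    PrBSfn f n ≠ transposeT (PcBSfn f n) := by
  set L₀ := seg f 2 (m₀ - 2) with hL₀
  set L₁ := seg f (m₀+1) (m₁ - m₀ - 1) with hL₁
  set L₂ := seg f (m₁+1) (n - m₁ - 1) with hL₂
  have hsplit : invPairsFn f n =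
      L₀ ++ ((1, m₀+1) :: (L₁ ++ ((2, m₁+1) :: L₂))) := by
    have e0 : seg f 0 n = seg f 0 1 ++ seg f 1 (n - 1) := by
      have := seg_split (f := f) (s := 0) (show n = 1 + (n - 1) by omega)
      simpa using this
    have e1 : seg f 1 (n - 1) = seg f 1 1 ++ seg f 2 (n - 2) := by
      have := seg_split (f := f) (s := 1) (show n - 1 = 1 + (n - 2) by omega)
      rw [show (1:ℕ) + 1 = 2 from rfl] at this
      exact this
    have e2 : seg f 2 (n - 2) = L₀ ++ seg f m₀ (n - m₀) := by
      have := seg_split (f := f) (s := 2) (show n - 2 = (m₀ - 2) + (n - m₀) by omega)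
      rw [show 2 + (m₀ - 2) = m₀ by omega] at this
      exact this
    have e3 : seg f m₀ (n - m₀) = seg f m₀ 1 ++ seg f (m₀+1) (n - m₀ - 1) :=
      seg_split (show n - m₀ = 1 + (n - m₀ - 1) by omega)
    have e4 : seg f (m₀+1) (n - m₀ - 1) = L₁ ++ seg f m₁ (n - m₁) := by
      have := seg_split (f := f) (s := m₀+1)
        (show n - m₀ - 1 = (m₁ - m₀ - 1) + (n - m₁) by omega)
      rw [show m₀ + 1 + (m₁ - m₀ - 1) = m₁ by omega] at this
      exact this
    have e5 : seg f m₁ (n - m₁) = seg f m₁ 1 ++ L₂ :=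
      seg_split (show n - m₁ = 1 + (n - m₁ - 1) by omega)
    have e6 : seg f m₀ 1 = [(1, m₀+1)] := by
      rw [seg_single_in (show f m₀ ≤ m₀ by omega), hfm0]
    have e7 : seg f m₁ 1 = [(2, m₁+1)] := by
      rw [seg_single_in (show f m₁ ≤ m₁ by omega), hfm1]
    have e8 : seg f 0 1 = [] := seg_single_out (by omega)
    have e9 : seg f 1 1 = [] := seg_single_out (by omega)
    rw [invPairsFn_eq_seg, e0, e1, e2, e3, e4, e5, e6, e7, e8, e9]
    simp
  have g0 : GoodL 2 L₀ := by
    rw [hL₀]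
    refine seg_good (fun i h1 h2 h3 => ?_)
    have := hbig0 i h1 (by omega) h3
    omega
  have g1 : GoodL 2 L₁ := by
    rw [hL₁]
    refine seg_good (fun i h1 h2 h3 => ?_)
    have := hbig1 i (by omega) (by omega) h3
    omega
  have g2 : GoodL 2 L₂ := by
    rw [hL₂]
    refine seg_good (fun i h1 h2 h3 => ?_)
    have := hbig2 i (by omega) (by omega) h3
    omega
  -- row Beissinger side
  have hPr : PrBSfn f n =
      foldR (rBS (foldR (rBS (foldR [] L₀) 1 (m₀+1)) L₁) 2 (m₁+1)) L₂ := by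
    rw [PrBSfn, hsplit]
    show foldR [] (L₀ ++ ((1, m₀+1) :: (L₁ ++ ((2, m₁+1) :: L₂)))) = _
    rw [foldR_append, foldR_cons, foldR_append, foldR_cons]
  obtain ⟨e₀, hrow0, he0⟩ := row0_phase (j := 2) g0 (T := []) (p := []) (e := [])
    (by simp) (by simp) (by simp)
  have hall0 : ∀ y ∈ (foldR [] L₀).headD [], 1 < y := by
    rw [hrow0]
    intro y hy
    simp only [List.nil_append] at hy
    have := he0 y hy; omega
  have hspec0 : (rBS (foldR [] L₀) 1 (m₀+1)).headD [] = 1 :: e₀.tail := by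
    rw [row0_insert_min hall0 (show (1:ℕ) ≠ m₀ + 1 by omega), hrow0]
    rfl
  obtain ⟨e₁, hrow1, he1⟩ := row0_phase (j := 2) g1
    (T := rBS (foldR [] L₀) 1 (m₀+1)) (p := [1]) (e := e₀.tail)
    (by simp) (by rw [hspec0]; rfl)
    (fun y hy => he0 y (List.mem_of_mem_tail hy))
  have hspec1 := row0_special (T := foldR (rBS (foldR [] L₀) 1 (m₀+1)) L₁)
    (p := [1]) (j := 2) (b := m₁ + 1) (by simp) hrow1 he1 (by omega)
  obtain ⟨e₂, hrow2, he2⟩ := row0_phase (j := 2) g2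
    (T := rBS (foldR (rBS (foldR [] L₀) 1 (m₀+1)) L₁) 2 (m₁+1))
    (p := [1, 2]) (e := e₁.tail)
    (by simp) (by rw [hspec1]; rfl)
    (fun y hy => he1 y (List.mem_of_mem_tail hy))
  have hrowfinal : ((PrBSfn f n).headD [])[1]? = some 2 := by
    rw [hPr, hrow2, List.getElem?_append_left (by simp)]
    rfl
  -- column Beissinger side
  have hPc : PcBSfn f n =
      foldC (cBS (foldC (cBS (foldC [] L₀) 1 (m₀+1)) L₁) 2 (m₁+1)) L₂ := by
    rw [PcBSfn, hsplit]
    show foldC [] (L₀ ++ ((1, m₀+1) :: (L₁ ++ ((2, m₁+1) :: L₂)))) = _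
    rw [foldC_append, foldC_cons, foldC_append, foldC_cons]
  have hpat0 : patOK 2 [] (foldC [] L₀) :=
    patOK_foldC (by simp) g0 patOK_nil_nil
  have hpat1 : patOK 2 [[1]] (cBS (foldC [] L₀) 1 (m₀+1)) :=
    patOK_cBS_small hpat0 (by omega) (by omega)
  have hpat2 : patOK 2 [[1]] (foldC (cBS (foldC [] L₀) 1 (m₀+1)) L₁) :=
    patOK_foldC (by simp) g1 hpat1
  have hpat3 : patOK 2 [([1] ++ [2])]
      (cBS (foldC (cBS (foldC [] L₀) 1 (m₀+1)) L₁) 2 (m₁+1)) :=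
    patOK_cBS_special hpat2 (by intro y hy; simp at hy; omega) (by simp) (by omega)
  have hpat4 : patOK 2 [([1] ++ [2])] (PcBSfn f n) := by
    rw [hPc]
    refine patOK_foldC ?_ g2 hpat3
    intro r hr y hy
    simp at hr
    subst hr
    simp at hy
    omega
  exact differ_small_left hrowfinal (by simp) hpat4 (by simp)
theorem permFn_lt {n : ℕ} (z : Equiv.Perm (Fin n)) {i : ℕ} (h : i < n) :
    permFn z i = (z ⟨i, h⟩ : ℕ) := by
  rw [permFn, dif_pos h]

/-- the only involutions `w ∈ S_n` with
`P_rBS(w) = P_cBS(w)^⊤` are the identity and `(1,2)`. -/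
theorem psi_fixed_points (n : ℕ) (w : Equiv.Perm (Fin n)) (hw : w * w = 1) :
    PrBS w = transposeT (PcBS w) ↔
      w = 1 ∨ ∃ h : 1 < n, w = Equiv.swap (⟨0, by omega⟩ : Fin n) ⟨1, h⟩ := by
  have hinv : ∀ x : Fin n, w (w x) = x := by
    intro x
    have := congrArg (fun σ => σ x) hw
    simpa [Equiv.Perm.mul_apply] using this
  set f := permFn w with hfdef
  have hfb : ∀ i, i < n → f i < n := by
    intro i h
    rw [hfdef, permFn_lt w h]
    exact (w ⟨i, h⟩).isLt
  have hfi : ∀ i, i < n → f (f i) = i := by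
    intro i h
    simp only [hfdef]
    rw [permFn_lt w h]
    have h2' : (w ⟨i, h⟩ : ℕ) < n := (w ⟨i, h⟩).isLt
    rw [permFn_lt w h2', Fin.eta, hinv]
  constructor
  · intro h
    by_contra hR
    push_neg at hR
    obtain ⟨hR1, hR2⟩ := hR
    unfold PrBS PcBS at h
    rw [← hfdef] at h
    by_cases hn1 : n ≤ 1
    · refine hR1 (Equiv.ext fun x => Fin.ext ?_)
      have h1 : (w x : ℕ) < n := (w x).isLt
      have h2 : (x : ℕ) < n := x.isLt
      show ((w x : Fin n) : ℕ) = ((1 : Equiv.Perm (Fin n)) x : ℕ)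
      simp only [Equiv.Perm.one_apply]
      omega
    push_neg at hn1
    have hval : ∀ i (hi : i < n), f i = (w ⟨i, hi⟩ : ℕ) := fun i hi => permFn_lt w hi
    -- case analysis on f 0
    rcases Nat.lt_or_ge (f 0) 2 with hf0 | hf0
    · rcases Nat.lt_or_ge (f 0) 1 with hf00 | hf01
      · -- f 0 = 0 : case A or identity
        have hf00' : f 0 = 0 := by omega
        by_cases hall : ∀ i, i < n → f i = i
        · refine hR1 (Equiv.ext fun x => Fin.ext ?_)
          show ((w x : Fin n) : ℕ) = ((1 : Equiv.Perm (Fin n)) x : ℕ)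
          simp only [Equiv.Perm.one_apply]
          have := hall x.val x.isLt
          rw [hval x.val x.isLt] at this
          rw [show (⟨(x : ℕ), x.isLt⟩ : Fin n) = x from Fin.ext rfl] at this
          exact this
        · push_neg at hall
          have hex : ∃ i, i < n ∧ f i ≠ i := by
            obtain ⟨i, h1, h2⟩ := hall
            exact ⟨i, h1, h2⟩
          obtain ⟨k, ⟨hkn, hfk⟩, hfix⟩ :
              ∃ k, (k < n ∧ f k ≠ k) ∧ ∀ i, i < k → f i = i := by
            obtain ⟨hs1, hs2⟩ := Nat.find_spec hex
            refine ⟨Nat.find hex, ⟨hs1, hs2⟩, fun i hik => ?_⟩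
            have hmin := Nat.find_min hex hik
            push_neg at hmin
            exact hmin (by omega)
          have hk1 : 1 ≤ k := by
            rcases Nat.eq_zero_or_pos k with h0 | h0
            · rw [h0] at hfk; exact absurd hf00' hfk
            · exact h0
          set m := f k with hmdef
          have hfkm : f k = m := rfl
          have hfmk : f m = k := by rw [hmdef, hfi k hkn]
          have hkm : k < m := by
            rcases Nat.lt_trichotomy m k with hlt | heq | hgt
            · have := hfix m hlt
              omega
            · omega
            · exact hgt
          have hmn : m < n := hfb k hkn
          have hbig : ∀ i, k ≤ i → i < n → i ≠ m → f i ≤ i → k + 1 ≤ f i := by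
            intro i h1 h2 h3 h4
            by_contra hc
            push_neg at hc
            have e2 : f (f i) = i := hfi i h2
            rcases Nat.lt_or_ge (f i) k with hlt | hge
            · have e1 : f (f i) = f i := hfix _ hlt
              omega
            · have hfik : f i = k := by omega
              rw [hfik, hfkm] at e2
              omega
          exact forward_A hk1 hkm hmn hfix hfmk
            (fun i a b c => hbig i a (by omega) (by omega) c)
            (fun i a b c => hbig i (by omega) b (by omega) c) h
      · -- f 0 = 1 : case C or swap
        have hf01' : f 0 = 1 := by omega
        have hf10 : f 1 = 0 := by
          have := hfi 0 (by omega)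
          rw [hf01'] at this
          exact this
        by_cases hall : ∀ i, 2 ≤ i → i < n → f i = i
        · refine hR2 hn1 (Equiv.ext fun x => Fin.ext ?_)
          have hx := x.isLt
          rcases Nat.lt_or_ge (x : ℕ) 2 with hx2 | hx2
          · rcases Nat.lt_or_ge (x : ℕ) 1 with hx1 | hx1
            · have hx0 : x = (⟨0, by omega⟩ : Fin n) := Fin.ext (show (x:ℕ) = 0 by omega)
              rw [hx0, Equiv.swap_apply_left]
              have := hval 0 (by omega)
              rw [hf01'] at this
              rw [show (⟨0, by omega⟩ : Fin n) = ⟨0, show (0:ℕ) < n by omega⟩ from rfl]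
              simp [← this]
            · have hx1' : x = (⟨1, hn1⟩ : Fin n) := Fin.ext (show (x:ℕ) = 1 by omega)
              rw [hx1', Equiv.swap_apply_right]
              have := hval 1 (by omega)
              rw [hf10] at this
              simp [← this]
          · rw [Equiv.swap_apply_of_ne_of_ne
              (Fin.ne_of_val_ne (show (x:ℕ) ≠ 0 by omega))
              (Fin.ne_of_val_ne (show (x:ℕ) ≠ 1 by omega))]
            have := hall x.val (by omega) x.isLt
            rw [hval x.val x.isLt,
              show (⟨(x : ℕ), x.isLt⟩ : Fin n) = x from Fin.ext rfl] at this
            exact this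
        · push_neg at hall
          have hex : ∃ i, 2 ≤ i ∧ i < n ∧ f i ≠ i := by
            obtain ⟨i, h1, h2, h3⟩ := hall
            exact ⟨i, h1, h2, h3⟩
          obtain ⟨k, ⟨hk2, hkn, hfk⟩, hfix⟩ :
              ∃ k, (2 ≤ k ∧ k < n ∧ f k ≠ k) ∧ ∀ i, 2 ≤ i → i < k → f i = i := by
            obtain ⟨hs1, hs2, hs3⟩ := Nat.find_spec hex
            refine ⟨Nat.find hex, ⟨hs1, hs2, hs3⟩, fun i h2i hik => ?_⟩
            have hmin := Nat.find_min hex hik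
            push_neg at hmin
            exact hmin h2i (by omega)
          set m := f k with hmdef
          have hfkm : f k = m := rfl
          have hfmk : f m = k := by rw [hmdef, hfi k hkn]
          have hkm : k < m := by
            rcases Nat.lt_trichotomy m k with hlt | heq | hgt
            · rcases Nat.lt_or_ge m 2 with hm2 | hm2
              · interval_cases m <;> omega
              · have := hfix m hm2 hlt
                omega
            · omega
            · exact hgt
          have hmn : m < n := hfb k hkn
          have hbig : ∀ i, k ≤ i → i < n → i ≠ m → f i ≤ i → k + 1 ≤ f i := by
            intro i h1 h2 h3 h4
            by_contra hc
            push_neg at hc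
            have e2 : f (f i) = i := hfi i h2
            rcases Nat.lt_or_ge (f i) k with hlt | hge
            · rcases Nat.lt_or_ge (f i) 2 with hlt2 | hge2
              · interval_cases hfi2 : (f i) <;> omega
              · have e1 : f (f i) = f i := hfix _ hge2 hlt
                omega
            · have hfik : f i = k := by omega
              rw [hfik, hfkm] at e2
              omega
          exact forward_C hk2 hkm hmn hf01' hf10 hfix hfmk
            (fun i a b c => hbig i a (by omega) (by omega) c)
            (fun i a b c => hbig i (by omega) b (by omega) c) h
    · -- f 0 = m₀ ≥ 2 : cases B
      set m₀ := f 0 with hm0def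
      have hf0m : f 0 = m₀ := rfl
      have hm0n : m₀ < n := hfb 0 (by omega)
      have hfm0 : f m₀ = 0 := by rw [hm0def, hfi 0 (by omega)]
      rcases Nat.lt_or_ge (f 1) 2 with hf1 | hf1
      · -- f 1 ∈ {0, 1}: f 1 = 0 impossible
        have hf11 : f 1 = 1 := by
          rcases Nat.lt_or_ge (f 1) 1 with h10 | h11
          · exfalso
            have := hfi 1 (by omega)
            have h10' : f 1 = 0 := by omega
            rw [h10', hf0m] at this
            omega
          · omega
        have hbig : ∀ i, 2 ≤ i → i < n → i ≠ m₀ → f i ≤ i → 2 ≤ f i := by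
          intro i h1 h2 h3 h4
          by_contra hc
          push_neg at hc
          have e2 : f (f i) = i := hfi i h2
          rcases Nat.lt_or_ge (f i) 1 with h0 | h1'
          · have : f i = 0 := by omega
            rw [this, hf0m] at e2
            omega
          · have : f i = 1 := by omega
            rw [this, hf11] at e2
            omega
        exact forward_B1 hf0 hm0n hf0m hf11 hfm0
          (fun i a b c => hbig i a (by omega) (by omega) c)
          (fun i a b c => hbig i (by omega) b (by omega) c) h
      · set m₁ := f 1 with hm1def
        have hf1m : f 1 = m₁ := rfl
        have hm1n : m₁ < n := hfb 1 (by omega)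
        have hfm1 : f m₁ = 1 := by rw [hm1def, hfi 1 (by omega)]
        have hne : m₀ ≠ m₁ := by
          intro hcon
          rw [hcon, hfm1] at hfm0
          omega
        have hbig : ∀ i, 2 ≤ i → i < n → i ≠ m₀ → i ≠ m₁ → f i ≤ i → 2 ≤ f i := by
          intro i h1 h2 h3 h3' h4
          by_contra hc
          push_neg at hc
          have e2 : f (f i) = i := hfi i h2
          rcases Nat.lt_or_ge (f i) 1 with h0 | h1'
          · have : f i = 0 := by omega
            rw [this, hf0m] at e2
            omega
          · have : f i = 1 := by omega
            rw [this, hf1m] at e2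
            omega
        rcases Nat.lt_or_ge m₁ m₀ with hcmp | hcmp
        · exact forward_B2 hf1 hcmp hm0n hf0m hf1m hfm0 hfm1
            (fun i a b c => hbig i a (by omega) (by omega) (by omega) c)
            (fun i a b c => hbig i (by omega) (by omega) (by omega) (by omega) c)
            (fun i a b c => hbig i (by omega) b (by omega) (by omega) c) h
        · have hcmp' : m₀ < m₁ := by omega
          exact forward_B3 hf0 hcmp' hm1n hf0m hf1m hfm0 hfm1
            (fun i a b c => hbig i a (by omega) (by omega) (by omega) c)
            (fun i a b c => hbig i (by omega) (by omega) (by omega) (by omega) c)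
            (fun i a b c => hbig i (by omega) b (by omega) (by omega) c) h
  · rintro (rfl | ⟨hn, rfl⟩)
    · unfold PrBS PcBS
      refine backward_id (fun i hi => ?_)
      rw [permFn_lt 1 hi]
      rfl
    · unfold PrBS PcBS
      refine backward_swap (by omega) ?_ ?_ (fun i h2 hin => ?_)
      · rw [permFn_lt _ (show (0:ℕ) < n by omega),
          show (⟨0, show (0:ℕ) < n by omega⟩ : Fin n) = ⟨0, by omega⟩ from rfl,
          Equiv.swap_apply_left]
      · rw [permFn_lt _ (show (1:ℕ) < n by omega),
          show (⟨1, show (1:ℕ) < n by omega⟩ : Fin n) = ⟨1, hn⟩ from rfl,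
          Equiv.swap_apply_right]
      · rw [permFn_lt _ hin, Equiv.swap_apply_of_ne_of_ne
          (Fin.ne_of_val_ne (show (i:ℕ) ≠ 0 by omega))
          (Fin.ne_of_val_ne (show (i:ℕ) ≠ 1 by omega))]
end GelfandRSK
end

section
/- The maps ι_asc and ι_des from involutions in S_n to fixed-point-free involutions in S_{2n} preserve weak descents, weak ascents, strict descents, and strict ascents: for every involution z in S_n, Des^=(ι_asc(z)) = Des^=(ι_des(z)), Asc^=(ι_asc(z)) = Asc^=(ι_des(z)), Des^<(ι_asc(z)) = Des^<(ι_des(z)), and Asc^<(ι_asc(z)) = Asc^<(ι_des(z)). -/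
namespace GelfandRSK

/-- the embeddings `ι_asc` and `ι_des` have the same weak/strict
descent and ascent sets. -/
theorem iota_descent_sets (n : ℕ) (z : Equiv.Perm (Fin n)) (hz : z * z = 1) :
    wDesEq (iotaAsc z) n = wDesEq (iotaDes z) n ∧
    wAscEq (iotaAsc z) n = wAscEq (iotaDes z) n ∧
    wDesLt (iotaAsc z) n = wDesLt (iotaDes z) n ∧
    wAscLt (iotaAsc z) n = wAscLt (iotaDes z) n := by
  classical
  set a := iotaAsc z with ha
  set d := iotaDes z with hd
  have key : ∀ i, i < n → (a i = d i ∧ a i < n) ∨ (n ≤ a i ∧ n ≤ d i) := by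
    intro i h
    simp only [ha, hd, iotaAsc, iotaDes, dif_pos h]
    by_cases hf : z ⟨i, h⟩ = ⟨i, h⟩
    · right
      rw [if_pos hf, if_pos hf]
      have hmem : i ∈ fixList z := by
        simp only [fixList, List.mem_map, List.mem_filter]
        exact ⟨⟨i, h⟩, ⟨List.mem_finRange _, by simp [hf]⟩, rfl⟩
      have hidx : (fixList z).idxOf i < (fixList z).length :=
        List.idxOf_lt_length_iff.2 hmem
      omega
    · left
      rw [if_neg hf, if_neg hf]
      exact ⟨rfl, (z ⟨i, h⟩).is_lt⟩
  refine ⟨?_, ?_, ?_, ?_⟩ <;> ext i <;>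
    simp only [wDesEq, wAscEq, wDesLt, wAscLt, Finset.mem_sdiff, Finset.mem_union,
      Finset.mem_filter, Finset.mem_range] <;>
    by_cases hi : i < n - 1
  all_goals
    first
    | (have K1 := key i (by omega)
       have K2 := key (i+1) (by omega)
       omega)
    | omega

end GelfandRSK
end
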